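/- arXiv:0809.0245 — 3 statements merged into one kernel-verified Lean document; each statement's English description precedes it below -/
import Mathlib

section
/- Let A be a J-antichain in R⁺ and let Φ(A) = {α ∈ R⁺ : α ≥ β for some β ∈ A}. Then Φ(A) is a J-ideal: Φ(A) ∩ R⁺(J) = ∅, and for all α ∈ Φ(A) and β ∈ R⁺ ∪ R(J) with α + β ∈ R, we have α + β ∈ Φ(A). -/
open RealInnerProductSpace

structure RootSys (n : ℕ) where
  R : Set (EuclideanSpace ℝ (Fin n))
  finite : R.Finite
  zero_not_mem : (0 : EuclideanSpace ℝ (Fin n)) ∉ R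
  spans : Submodule.span ℝ R = ⊤
  neg_mem : ∀ α ∈ R, -α ∈ R
  reduced : ∀ α ∈ R, ∀ t : ℝ, t • α ∈ R → t = 1 ∨ t = -1
  reflect_mem : ∀ α ∈ R, ∀ β ∈ R, β - (2 * ⟪α, β⟫ / ⟪α, α⟫) • α ∈ R
  crystal : ∀ α ∈ R, ∀ β ∈ R, ∃ k : ℤ, 2 * ⟪α, β⟫ / ⟪α, α⟫ = (k : ℝ)
  irreducible : ∀ S ⊆ R, (∀ α ∈ S, ∀ β ∈ R \ S, ⟪α, β⟫ = 0) → S = ∅ ∨ S = R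

structure BasedRootSys (n : ℕ) extends RootSys n where
  simple : Fin n → EuclideanSpace ℝ (Fin n)
  simple_mem : ∀ i, simple i ∈ R
  simple_indep : LinearIndependent ℝ simple
  pos_or_neg : ∀ α ∈ R, α ∈ AddSubmonoid.closure (Set.range simple) ∨
      -α ∈ AddSubmonoid.closure (Set.range simple)

namespace BasedRootSys

variable {n : ℕ} (RS : BasedRootSys n)

/-- `Q⁺`, the nonnegative integer span of the simple roots. -/
noncomputable def Qplus : AddSubmonoid (EuclideanSpace ℝ (Fin n)) :=
  AddSubmonoid.closure (Set.range RS.simple)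

/-- The dominance order. -/
def le (α β : EuclideanSpace ℝ (Fin n)) : Prop := β - α ∈ RS.Qplus

/-- The positive roots. -/
def Rpos : Set (EuclideanSpace ℝ (Fin n)) := {α ∈ RS.R | α ∈ RS.Qplus}

end BasedRootSys

namespace BasedRootSys

variable {n : ℕ} (RS : BasedRootSys n)

/-- `R(J)`, the roots supported on `J`. -/
noncomputable def RJ (J : Set (Fin n)) : Set (EuclideanSpace ℝ (Fin n)) :=
  {α ∈ RS.R | α ∈ AddSubgroup.closure (RS.simple '' J)}

/-- `R⁺(J)`, the positive roots supported on `J`. -/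
noncomputable def RposJ (J : Set (Fin n)) : Set (EuclideanSpace ℝ (Fin n)) :=
  RS.RJ J ∩ RS.Rpos

/-- A `J`-antichain in `R⁺`. -/
def IsJAntichain (J : Set (Fin n)) (A : Set (EuclideanSpace ℝ (Fin n))) : Prop :=
  A ⊆ RS.Rpos ∧ A ∩ RS.RposJ J = ∅ ∧
  (∀ α ∈ A, ∀ β ∈ A, α ≠ β → ¬ RS.le α β) ∧
  (∀ α ∈ A, ∀ j ∈ J, α - RS.simple j ∉ RS.R)

/-- The ideal `Φ(A)` generated by `A`. -/
def PhiOf (A : Set (EuclideanSpace ℝ (Fin n))) : Set (EuclideanSpace ℝ (Fin n)) :=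
  {α ∈ RS.Rpos | ∃ β ∈ A, RS.le β α}

/-- A `J`-ideal in `R⁺`. -/
def IsJIdeal (J : Set (Fin n)) (Φ : Set (EuclideanSpace ℝ (Fin n))) : Prop :=
  Φ ⊆ RS.Rpos ∧ Φ ∩ RS.RposJ J = ∅ ∧
  (∀ α ∈ Φ, ∀ β, (β ∈ RS.Rpos ∨ β ∈ RS.RJ J) → α + β ∈ RS.R → α + β ∈ Φ)

/-- The set of minimal elements of a subset of `R⁺` in the dominance order. -/
def minimals (Φ : Set (EuclideanSpace ℝ (Fin n))) : Set (EuclideanSpace ℝ (Fin n)) :=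
  {α ∈ Φ | ∀ β ∈ Φ, RS.le β α → β = α}

end BasedRootSys
section Aux

open RealInnerProductSpace

variable {n : ℕ} (RS : BasedRootSys n)

lemma aux_mem_Qplus_iff (x : EuclideanSpace ℝ (Fin n)) :
    x ∈ RS.Qplus ↔ ∃ c : Fin n → ℕ, x = ∑ i, (c i : ℝ) • RS.simple i := by
  constructor
  · intro hx
    induction hx using AddSubmonoid.closure_induction with
    | mem y hy =>
      obtain ⟨i, rfl⟩ := hy
      exact ⟨fun k => if k = i then 1 else 0, by simp⟩
    | zero => exact ⟨0, by simp⟩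
    | add y z _ _ hy hz =>
      obtain ⟨c, rfl⟩ := hy
      obtain ⟨d, rfl⟩ := hz
      exact ⟨c + d, by simp [add_smul, Finset.sum_add_distrib]⟩
  · rintro ⟨c, rfl⟩
    refine AddSubmonoid.sum_mem _ (fun i _ => ?_)
    rw [show ((c i : ℝ)) • RS.simple i = c i • RS.simple i from
      (Nat.cast_smul_eq_nsmul ℝ _ _)]
    exact AddSubmonoid.nsmul_mem _ (AddSubmonoid.subset_closure (Set.mem_range_self i)) _

lemma aux_coords_unique {a b : Fin n → ℝ}
    (h : ∑ i, a i • RS.simple i = ∑ i, b i • RS.simple i) : a = b := by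
  have h2 : ∑ i, (a i - b i) • RS.simple i = 0 := by
    simp [sub_smul, Finset.sum_sub_distrib, h]
  have := Fintype.linearIndependent_iff.mp RS.simple_indep (fun i => a i - b i) h2
  funext i
  have h3 := this i
  linarith

lemma aux_pos_of_ne_zero {x : EuclideanSpace ℝ (Fin n)} (hx : x ≠ 0) : 0 < ⟪x, x⟫ :=
  lt_of_not_ge (fun h => hx (real_inner_self_nonpos.mp h))

lemma aux_root_ne_zero {α : EuclideanSpace ℝ (Fin n)} (hα : α ∈ RS.R) : α ≠ 0 :=
  fun h => RS.zero_not_mem (h ▸ hα)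

lemma aux_inner_self_pos {α : EuclideanSpace ℝ (Fin n)} (hα : α ∈ RS.R) :
    0 < ⟪α, α⟫ := aux_pos_of_ne_zero (aux_root_ne_zero RS hα)

lemma aux_cs {α β : EuclideanSpace ℝ (Fin n)} (hα : α ≠ 0)
    (h : ∀ t : ℝ, β ≠ t • α) : ⟪α, β⟫ * ⟪α, β⟫ < ⟪α, α⟫ * ⟪β, β⟫ := by
  have hA : 0 < ⟪α, α⟫ := aux_pos_of_ne_zero hα
  set r : ℝ := ⟪α, β⟫ / ⟪α, α⟫ with hr
  have hx : β - r • α ≠ 0 := by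
    intro h0
    exact h r (by rw [sub_eq_zero] at h0; exact h0)
  have hpos : 0 < ⟪β - r • α, β - r • α⟫ := aux_pos_of_ne_zero hx
  have hexp : ⟪β - r • α, β - r • α⟫
      = ⟪β, β⟫ - 2 * r * ⟪α, β⟫ + r * r * ⟪α, α⟫ := by
    simp only [inner_sub_left, inner_sub_right, real_inner_smul_left, real_inner_smul_right,
      real_inner_comm β α]
    ring
  have hrA : r * ⟪α, α⟫ = ⟪α, β⟫ := div_mul_cancel₀ _ (ne_of_gt hA)
  rw [hexp] at hpos
  nlinarith [hpos, hA, hrA]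

end Aux
section Aux2

open RealInnerProductSpace

variable {n : ℕ} (RS : BasedRootSys n)

/-- Key lemma: roots at acute angle differ by a root (or coincide). -/
lemma aux_key {α β : EuclideanSpace ℝ (Fin n)} (hα : α ∈ RS.R) (hβ : β ∈ RS.R)
    (hpos : 0 < ⟪α, β⟫) : α = β ∨ α - β ∈ RS.R := by
  by_cases hdep : ∃ t : ℝ, β = t • α
  · obtain ⟨t, rfl⟩ := hdep
    rcases RS.reduced α hα t hβ with rfl | rfl
    · left; rw [one_smul]
    · exfalso
      rw [real_inner_smul_right] at hpos
      have := aux_inner_self_pos RS hα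
      nlinarith
  · push_neg at hdep
    obtain ⟨k, hk⟩ := RS.crystal α hα β hβ
    obtain ⟨m, hm⟩ := RS.crystal β hβ α hα
    have hA := aux_inner_self_pos RS hα
    have hB := aux_inner_self_pos RS hβ
    have hcs := aux_cs (aux_root_ne_zero RS hα) hdep
    rw [real_inner_comm α β] at hm
    have hk1 : (1 : ℤ) ≤ k := by
      have : (0 : ℝ) < (k : ℝ) := by rw [← hk]; positivity
      exact_mod_cast this
    have hm1 : (1 : ℤ) ≤ m := by
      have : (0 : ℝ) < (m : ℝ) := by rw [← hm]; positivity
      exact_mod_cast this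
    have hkm : (k : ℝ) * (m : ℝ) < 4 := by
      rw [← hk, ← hm]
      rw [div_mul_div_comm, div_lt_iff₀ (by positivity)]
      nlinarith
    have hkm' : k * m < 4 := by exact_mod_cast hkm
    have : k = 1 ∨ m = 1 := by
      by_contra hcon
      push_neg at hcon
      have : 2 ≤ k := lt_of_le_of_ne hk1 (Ne.symm hcon.1)
      have : 2 ≤ m := lt_of_le_of_ne hm1 (Ne.symm hcon.2)
      nlinarith
    rcases this with rfl | rfl
    · right
      have h1 := RS.reflect_mem α hα β hβ
      rw [hk] at h1
      simp only [Int.cast_one, one_smul] at h1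
      have h2 := RS.neg_mem _ h1
      rw [neg_sub] at h2
      exact h2
    · right
      have h1 := RS.reflect_mem β hβ α hα
      rw [real_inner_comm α β, hm] at h1
      simpa using h1

/-- Obtuse non-opposite roots: one of the two Cartan integers is `-1`. -/
lemma aux_dichotomy {α β : EuclideanSpace ℝ (Fin n)} (hα : α ∈ RS.R) (hβ : β ∈ RS.R)
    (hneg : ⟪α, β⟫ < 0) (hne : α ≠ -β) :
    2 * ⟪α, β⟫ = -⟪α, α⟫ ∨ 2 * ⟪α, β⟫ = -⟪β, β⟫ := by
  by_cases hdep : ∃ t : ℝ, β = t • α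
  · obtain ⟨t, rfl⟩ := hdep
    rcases RS.reduced α hα t hβ with rfl | rfl
    · exfalso
      rw [real_inner_smul_right, one_mul] at hneg
      exact absurd hneg (not_lt.mpr (le_of_lt (aux_inner_self_pos RS hα)))
    · exact absurd (by module) hne
  · push_neg at hdep
    obtain ⟨k, hk⟩ := RS.crystal α hα β hβ
    obtain ⟨m, hm⟩ := RS.crystal β hβ α hα
    have hA := aux_inner_self_pos RS hα
    have hB := aux_inner_self_pos RS hβ
    have hcs := aux_cs (aux_root_ne_zero RS hα) hdep
    rw [real_inner_comm α β] at hm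
    have hk1 : k ≤ (-1 : ℤ) := by
      have : (k : ℝ) < 0 := by
        rw [← hk]
        exact div_neg_of_neg_of_pos (by linarith) hA
      have : k < 0 := by exact_mod_cast this
      omega
    have hm1 : m ≤ (-1 : ℤ) := by
      have : (m : ℝ) < 0 := by
        rw [← hm]
        exact div_neg_of_neg_of_pos (by linarith) hB
      have : m < 0 := by exact_mod_cast this
      omega
    have hkm : (k : ℝ) * (m : ℝ) < 4 := by
      rw [← hk, ← hm]
      rw [div_mul_div_comm, div_lt_iff₀ (by positivity)]
      nlinarith
    have hkm' : k * m < 4 := by exact_mod_cast hkm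
    have hd : k = -1 ∨ m = -1 := by
      by_contra hcon
      push_neg at hcon
      have : k ≤ -2 := by omega
      have : m ≤ -2 := by omega
      nlinarith
    rcases hd with rfl | rfl
    · left
      push_cast at hk
      rw [div_eq_iff (ne_of_gt hA)] at hk
      linarith
    · right
      push_cast at hm
      rw [div_eq_iff (ne_of_gt hB)] at hm
      linarith

/-- A root cannot have coefficients of mixed signs. -/
lemma aux_no_mixed {x : EuclideanSpace ℝ (Fin n)} (hx : x ∈ RS.R) {a : Fin n → ℝ}
    (hrep : x = ∑ i, a i • RS.simple i) {i0 i1 : Fin n}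
    (h0 : a i0 < 0) (h1 : 0 < a i1) : False := by
  rcases RS.pos_or_neg x hx with h | h
  · obtain ⟨c, hc⟩ := (aux_mem_Qplus_iff RS x).mp h
    have := aux_coords_unique RS (hrep.symm.trans hc)
    have h2 : a i0 = (c i0 : ℝ) := congrFun this i0
    have : (0:ℝ) ≤ c i0 := by positivity
    linarith
  · have hrep2 : -x = ∑ i, (-(a i)) • RS.simple i := by
      rw [hrep]; simp [Finset.sum_neg_distrib, neg_smul]
    obtain ⟨c, hc⟩ := (aux_mem_Qplus_iff RS (-x)).mp h
    have := aux_coords_unique RS (hrep2.symm.trans hc)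
    have h2 : -(a i1) = (c i1 : ℝ) := congrFun this i1
    have : (0:ℝ) ≤ c i1 := by positivity
    linarith

lemma aux_simple_ne {i j : Fin n} (hij : i ≠ j) : RS.simple i ≠ RS.simple j :=
  fun h => hij (RS.simple_indep.injective h)

lemma aux_single_rep (i : Fin n) :
    RS.simple i = ∑ k, (if k = i then (1:ℝ) else 0) • RS.simple k := by
  rw [Finset.sum_eq_single i]
  · simp
  · intro b _ hb; simp [hb]
  · intro h; exact absurd (Finset.mem_univ i) h

lemma aux_simple_sub_not_root {i j : Fin n} (hij : i ≠ j) :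
    RS.simple i - RS.simple j ∉ RS.R := by
  intro hmem
  have hrep : RS.simple i - RS.simple j
      = ∑ k, ((if k = i then (1:ℝ) else 0) - (if k = j then (1:ℝ) else 0)) • RS.simple k := by
    simp only [sub_smul, Finset.sum_sub_distrib]
    rw [← aux_single_rep RS i, ← aux_single_rep RS j]
  refine aux_no_mixed RS hmem hrep (i0 := j) (i1 := i) ?_ ?_
  · simp [hij, Ne.symm hij]
  · simp [hij, Ne.symm hij]

lemma aux_simple_inner_nonpos {i j : Fin n} (hij : i ≠ j) :
    ⟪RS.simple i, RS.simple j⟫ ≤ 0 := by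
  by_contra h
  push_neg at h
  rcases aux_key RS (RS.simple_mem i) (RS.simple_mem j) h with heq | hmem
  · exact aux_simple_ne RS hij heq
  · exact aux_simple_sub_not_root RS hij hmem

end Aux2
section Aux3

open RealInnerProductSpace

variable {n : ℕ} (RS : BasedRootSys n)

lemma aux_sum_split (c : Fin n → ℕ) (i : Fin n) (h : 1 ≤ c i) :
    ∑ k, (c k : ℝ) • RS.simple k
      = (∑ k, ((Function.update c i (c i - 1)) k : ℝ) • RS.simple k) + RS.simple i := by
  have hstep : ∀ k ∈ Finset.univ, (c k : ℝ) • RS.simple k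
      = ((Function.update c i (c i - 1)) k : ℝ) • RS.simple k
        + (if k = i then RS.simple i else 0) := by
    intro k _
    by_cases hk : k = i
    · subst hk
      rw [Function.update_self, if_pos rfl, Nat.cast_sub h, Nat.cast_one, sub_smul, one_smul]
      abel
    · rw [Function.update_of_ne hk, if_neg hk, add_zero]
  rw [Finset.sum_congr rfl hstep, Finset.sum_add_distrib]
  congr 1
  simp

lemma aux_ne_neg_simple {γ : EuclideanSpace ℝ (Fin n)} (hγQ : γ ∈ RS.Qplus) (i : Fin n) :
    γ ≠ -RS.simple i := by
  intro heq
  obtain ⟨g, hg⟩ := (aux_mem_Qplus_iff RS γ).mp hγQ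
  have hneg_rep : -RS.simple i = ∑ k, (-(if k = i then (1:ℝ) else 0)) • RS.simple k := by
    have he : ∑ k, (-(if k = i then (1:ℝ) else 0)) • RS.simple k
        = -(∑ k, (if k = i then (1:ℝ) else 0) • RS.simple k) := by
      simp only [neg_smul, Finset.sum_neg_distrib]
    rw [he, ← aux_single_rep RS i]
  have h4 := aux_coords_unique RS (hg.symm.trans (heq.trans hneg_rep))
  have h5 := congrFun h4 i
  simp only [if_pos rfl] at h5
  have : (0:ℝ) ≤ (g i : ℝ) := Nat.cast_nonneg _
  rw [h5] at this
  norm_num at this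

/-- The crux combinatorial lemma. -/
lemma aux_crux : ∀ N : ℕ, ∀ c : Fin n → ℕ, (∑ i, c i) = N → ∀ j : Fin n, c j = 0 →
    ∀ γ : EuclideanSpace ℝ (Fin n), γ ∈ RS.R → γ ∈ RS.Qplus → γ ≠ RS.simple j →
    γ - RS.simple j ∉ RS.R →
    γ + (∑ i, (c i : ℝ) • RS.simple i) ∈ RS.R →
    γ + (∑ i, (c i : ℝ) • RS.simple i) - RS.simple j ∈ RS.R → False := by
  intro N
  induction N using Nat.strong_induction_on with
  | _ N ih =>
  intro c hcN j hcj γ hγR hγQ hγj hγjR hαR hβR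
  by_cases hN : N = 0
  · subst hN
    have hc0 : ∀ i ∈ Finset.univ, (c i : ℝ) • RS.simple i = 0 := by
      intro i _
      have : c i = 0 := by
        have := Finset.sum_eq_zero_iff.mp hcN i (Finset.mem_univ i)
        exact this
      rw [this]; simp
    rw [Finset.sum_eq_zero hc0, add_zero] at hβR
    exact hγjR hβR
  · set ν := ∑ i, (c i : ℝ) • RS.simple i with hν
    have hex : ∃ i0, 1 ≤ c i0 := by
      by_contra hcon
      push_neg at hcon
      have : ∑ i, c i = 0 := Finset.sum_eq_zero (fun i _ => by have := hcon i; omega)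
      omega
    obtain ⟨i0, hi0⟩ := hex
    have hi0j : i0 ≠ j := fun h => by rw [h, hcj] at hi0; omega
    obtain ⟨g, hg⟩ := (aux_mem_Qplus_iff RS γ).mp hγQ
    -- Step 1
    have h1 : ⟪γ, RS.simple j⟫ ≤ 0 := by
      by_contra h
      push_neg at h
      rcases aux_key RS hγR (RS.simple_mem j) h with heq | hmem
      · exact hγj heq
      · exact hγjR hmem
    -- Step 2
    have h2 : ⟪γ + ν - RS.simple j, γ⟫ ≤ 0 := by
      by_contra h
      push_neg at h
      rcases aux_key RS hβR hγR h with heq | hmem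
      · have hνeq : ν = RS.simple j := by
          rw [sub_eq_iff_eq_add] at heq
          exact add_left_cancel heq
        have h4 : ∑ k, (c k : ℝ) • RS.simple k = ∑ k, (if k = j then (1:ℝ) else 0) • RS.simple k := by
          rw [← aux_single_rep RS j, ← hν, hνeq]
        have h5 := congrFun (aux_coords_unique RS h4) j
        simp [hcj] at h5
      · have he : γ + ν - RS.simple j - γ = ν - RS.simple j := by abel
        rw [he] at hmem
        have hrep : ν - RS.simple j
            = ∑ k, ((c k : ℝ) - (if k = j then 1 else 0)) • RS.simple k := by
          simp only [sub_smul, Finset.sum_sub_distrib]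
          rw [← aux_single_rep RS j, hν]
        refine aux_no_mixed RS hmem hrep (i0 := j) (i1 := i0) ?_ ?_
        · simp [hcj]
        · have : (1:ℝ) ≤ (c i0 : ℝ) := by exact_mod_cast hi0
          simp only [if_neg hi0j]
          linarith
    -- Step 3
    have h3 : ⟪γ, ν⟫ < 0 := by
      have e1 : ⟪γ, γ + ν - RS.simple j⟫ ≤ 0 := by
        rw [real_inner_comm]
        exact h2
      have e2 : ⟪γ, γ + ν - RS.simple j⟫ = ⟪γ, γ⟫ + ⟪γ, ν⟫ - ⟪γ, RS.simple j⟫ := by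
        simp only [inner_add_right, inner_sub_right]
      have := aux_inner_self_pos RS hγR
      rw [e2] at e1
      linarith
    -- Step 4
    have h4ex : ∃ i, (c i : ℝ) * ⟪γ, RS.simple i⟫ < 0 := by
      by_contra hcon
      push_neg at hcon
      have hsum : (0:ℝ) ≤ ∑ i, (c i:ℝ) * ⟪γ, RS.simple i⟫ :=
        Finset.sum_nonneg (fun i _ => hcon i)
      have he : ⟪γ, ν⟫ = ∑ i, (c i:ℝ) * ⟪γ, RS.simple i⟫ := by
        rw [hν]
        simp only [inner_sum, real_inner_smul_right]
      linarith
    obtain ⟨i, hi⟩ := h4ex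
    have hci : 1 ≤ c i := by
      by_contra h
      push_neg at h
      have : c i = 0 := by omega
      rw [this] at hi
      simp at hi
    have hγi : ⟪γ, RS.simple i⟫ < 0 := by
      by_contra h
      push_neg at h
      have : (0:ℝ) ≤ (c i:ℝ) * ⟪γ, RS.simple i⟫ := mul_nonneg (Nat.cast_nonneg _) h
      linarith
    have hij : i ≠ j := fun h => by rw [h, hcj] at hci; omega
    have hγnn : γ ≠ -RS.simple i := aux_ne_neg_simple RS hγQ i
    -- Step 5
    have h5 : γ + RS.simple i ∈ RS.R := by
      have hni : -RS.simple i ∈ RS.R := RS.neg_mem _ (RS.simple_mem i)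
      have hpos : 0 < ⟪γ, -RS.simple i⟫ := by
        rw [inner_neg_right]
        linarith
      rcases aux_key RS hγR hni hpos with heq | hmem
      · exact absurd heq hγnn
      · rwa [sub_neg_eq_add] at hmem
    -- Step 6
    have h6 : γ + RS.simple i - RS.simple j ∉ RS.R := by
      intro hτ
      rcases aux_dichotomy RS hγR (RS.simple_mem i) hγi hγnn with hcase | hcase
      · -- 2⟪γ, s i⟫ = -⟪γ, γ⟫
        have hτγ : 0 < ⟪γ + RS.simple i - RS.simple j, γ⟫ := by
          have expand : ⟪γ + RS.simple i - RS.simple j, γ⟫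
              = ⟪γ, γ⟫ + ⟪RS.simple i, γ⟫ - ⟪RS.simple j, γ⟫ := by
            simp only [inner_add_left, inner_sub_left]
          rw [expand, real_inner_comm γ (RS.simple i), real_inner_comm γ (RS.simple j)]
          have hΓ := aux_inner_self_pos RS hγR
          linarith
        rcases aux_key RS hτ hγR hτγ with heq | hmem
        · have : RS.simple i = RS.simple j := by
            rw [sub_eq_iff_eq_add] at heq
            exact add_left_cancel heq
          exact aux_simple_ne RS hij this
        · have he : γ + RS.simple i - RS.simple j - γ = RS.simple i - RS.simple j := by abel
          rw [he] at hmem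
          exact aux_simple_sub_not_root RS hij hmem
      · -- 2⟪γ, s i⟫ = -⟪s i, s i⟫
        have hτi : 0 < ⟪γ + RS.simple i - RS.simple j, RS.simple i⟫ := by
          have expand : ⟪γ + RS.simple i - RS.simple j, RS.simple i⟫
              = ⟪γ, RS.simple i⟫ + ⟪RS.simple i, RS.simple i⟫ - ⟪RS.simple j, RS.simple i⟫ := by
            simp only [inner_add_left, inner_sub_left]
          have hji := aux_simple_inner_nonpos RS (Ne.symm hij)
          have hsi := aux_inner_self_pos RS (RS.simple_mem i)
          rw [expand]
          linarith
        rcases aux_key RS hτ (RS.simple_mem i) hτi with heq | hmem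
        · have : γ = RS.simple j := by
            rw [sub_eq_iff_eq_add] at heq
            rw [add_comm (RS.simple i) (RS.simple j)] at heq
            exact add_right_cancel heq
          exact hγj this
        · have he : γ + RS.simple i - RS.simple j - RS.simple i = γ - RS.simple j := by abel
          rw [he] at hmem
          exact hγjR hmem
    -- Step 7: recurse
    set c' := Function.update c i (c i - 1) with hc'
    have hsum' : ∑ k, c' k = N - 1 := by
      have e1 : ∑ k, c' k = (c i - 1) + ∑ k ∈ Finset.univ.erase i, c k := by
        rw [hc', Finset.sum_update_of_mem (Finset.mem_univ i), Finset.erase_eq]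
      have e2 : ∑ k, c k = c i + ∑ k ∈ Finset.univ.erase i, c k :=
        (Finset.add_sum_erase _ _ (Finset.mem_univ i)).symm
      omega
    have hsplit : ν = (∑ k, (c' k : ℝ) • RS.simple k) + RS.simple i :=
      aux_sum_split RS c i hci
    have hc'j : c' j = 0 := by
      rw [hc', Function.update_of_ne (Ne.symm hij)]
      exact hcj
    have hγ'Q : γ + RS.simple i ∈ RS.Qplus :=
      AddSubmonoid.add_mem _ hγQ (AddSubmonoid.subset_closure (Set.mem_range_self i))
    have hγ'j : γ + RS.simple i ≠ RS.simple j := by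
      intro heq
      have h4 : ∑ k, ((g k:ℝ) + (if k = i then 1 else 0)) • RS.simple k
          = ∑ k, (if k = j then (1:ℝ) else 0) • RS.simple k := by
        simp only [add_smul, Finset.sum_add_distrib]
        rw [← aux_single_rep RS i, ← aux_single_rep RS j, ← hg]
        exact heq
      have h5' := congrFun (aux_coords_unique RS h4) i
      have h5'' : ((g i : ℝ) + 1) = 0 := by simpa [hij] using h5'
      have : (0:ℝ) ≤ (g i : ℝ) := Nat.cast_nonneg _
      linarith
    have hα'R : γ + RS.simple i + (∑ k, (c' k : ℝ) • RS.simple k) ∈ RS.R := by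
      have he : γ + RS.simple i + (∑ k, (c' k : ℝ) • RS.simple k) = γ + ν := by
        rw [hsplit]; abel
      rw [he]
      exact hαR
    have hβ'R : γ + RS.simple i + (∑ k, (c' k : ℝ) • RS.simple k) - RS.simple j ∈ RS.R := by
      have he : γ + RS.simple i + (∑ k, (c' k : ℝ) • RS.simple k) - RS.simple j
          = γ + ν - RS.simple j := by
        rw [hsplit]; abel
      rw [he]
      exact hβR
    exact ih (N-1) (by omega) c' hsum' j hc'j (γ + RS.simple i) h5 hγ'Q hγ'j h6 hα'R hβ'R

end Aux3
section Aux4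

open RealInnerProductSpace

variable {n : ℕ} (RS : BasedRootSys n)

/-- Three-term lemma: if `β + γ₁ + γ₂` is a root then one partial sum is. -/
lemma aux_three {β γ₁ γ₂ : EuclideanSpace ℝ (Fin n)} (hβ : β ∈ RS.R) (hγ₁ : γ₁ ∈ RS.R)
    (hγ₂ : γ₂ ∈ RS.R) (hsum : β + γ₁ + γ₂ ∈ RS.R) (h12 : γ₁ + γ₂ ≠ 0)
    (h1 : β ≠ -γ₁) (h2 : β ≠ -γ₂) : β + γ₁ ∈ RS.R ∨ β + γ₂ ∈ RS.R := by
  by_contra hcon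
  push_neg at hcon
  obtain ⟨hn1, hn2⟩ := hcon
  have hb1 : 0 ≤ ⟪β, γ₁⟫ := by
    by_contra h
    push_neg at h
    have hpos : 0 < ⟪β, -γ₁⟫ := by rw [inner_neg_right]; linarith
    rcases aux_key RS hβ (RS.neg_mem _ hγ₁) hpos with heq | hmem
    · exact h1 heq
    · rw [sub_neg_eq_add] at hmem
      exact hn1 hmem
  have hb2 : 0 ≤ ⟪β, γ₂⟫ := by
    by_contra h
    push_neg at h
    have hpos : 0 < ⟪β, -γ₂⟫ := by rw [inner_neg_right]; linarith
    rcases aux_key RS hβ (RS.neg_mem _ hγ₂) hpos with heq | hmem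
    · exact h2 heq
    · rw [sub_neg_eq_add] at hmem
      exact hn2 hmem
  have hs1 : ⟪β + γ₁ + γ₂, γ₁⟫ ≤ 0 := by
    by_contra h
    push_neg at h
    rcases aux_key RS hsum hγ₁ h with heq | hmem
    · have h'' : β + γ₁ + γ₂ - γ₁ = 0 := sub_eq_zero_of_eq heq
      have h0 : β + γ₂ = 0 := by rw [← h'']; abel
      exact h2 (eq_neg_of_add_eq_zero_left h0)
    · have he : β + γ₁ + γ₂ - γ₁ = β + γ₂ := by abel
      rw [he] at hmem
      exact hn2 hmem
  have hs2 : ⟪β + γ₁ + γ₂, γ₂⟫ ≤ 0 := by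
    by_contra h
    push_neg at h
    rcases aux_key RS hsum hγ₂ h with heq | hmem
    · have h'' : β + γ₁ + γ₂ - γ₂ = 0 := sub_eq_zero_of_eq heq
      have h0 : β + γ₁ = 0 := by rw [← h'']; abel
      exact h1 (eq_neg_of_add_eq_zero_left h0)
    · have he : β + γ₁ + γ₂ - γ₂ = β + γ₁ := by abel
      rw [he] at hmem
      exact hn1 hmem
  have hq : 0 < ⟪γ₁ + γ₂, γ₁ + γ₂⟫ := aux_pos_of_ne_zero h12
  have hexp : ⟪γ₁ + γ₂, γ₁ + γ₂⟫
      = (⟪β + γ₁ + γ₂, γ₁⟫ - ⟪β, γ₁⟫) + (⟪β + γ₁ + γ₂, γ₂⟫ - ⟪β, γ₂⟫) := by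
    simp only [inner_add_left, inner_add_right]
    ring
  rw [hexp] at hq
  linarith

lemma aux_RJ_coords {J : Set (Fin n)} {x : EuclideanSpace ℝ (Fin n)}
    (hx : x ∈ AddSubgroup.closure (RS.simple '' J)) :
    ∃ c : Fin n → ℝ, (∀ i, i ∉ J → c i = 0) ∧ x = ∑ i, c i • RS.simple i := by
  induction hx using AddSubgroup.closure_induction with
  | mem y hy =>
    obtain ⟨j, hjJ, rfl⟩ := hy
    refine ⟨fun k => if k = j then 1 else 0, fun i hi => ?_, (aux_single_rep RS j)⟩
    by_cases h : i = j
    · subst h; exact absurd hjJ hi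
    · simp [h]
  | zero => exact ⟨0, fun i _ => rfl, by simp⟩
  | add y z _ _ hy hz =>
    obtain ⟨c, hc0, rfl⟩ := hy
    obtain ⟨d, hd0, rfl⟩ := hz
    exact ⟨c + d, fun i hi => by simp [hc0 i hi, hd0 i hi],
      by simp [add_smul, Finset.sum_add_distrib]⟩
  | neg y _ hy =>
    obtain ⟨c, hc0, rfl⟩ := hy
    exact ⟨-c, fun i hi => by simp [hc0 i hi],
      by simp [neg_smul, Finset.sum_neg_distrib]⟩

lemma aux_coords_mem_RJ {J : Set (Fin n)} {c : Fin n → ℕ} (hsupp : ∀ i, i ∉ J → c i = 0) :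
    ∑ i, (c i : ℝ) • RS.simple i ∈ AddSubgroup.closure (RS.simple '' J) := by
  refine AddSubgroup.sum_mem _ (fun i _ => ?_)
  by_cases hi : i ∈ J
  · rw [show ((c i : ℝ)) • RS.simple i = c i • RS.simple i from (Nat.cast_smul_eq_nsmul ℝ _ _)]
    exact AddSubgroup.nsmul_mem _ (AddSubgroup.subset_closure (Set.mem_image_of_mem RS.simple hi)) _
  · rw [hsupp i hi]
    simp only [Nat.cast_zero, zero_smul]
    exact AddSubgroup.zero_mem _

lemma aux_simple_mem_RposJ {J : Set (Fin n)} {j : Fin n} (hj : j ∈ J) :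
    RS.simple j ∈ RS.RposJ J := by
  constructor
  · exact ⟨RS.simple_mem j, AddSubgroup.subset_closure (Set.mem_image_of_mem RS.simple hj)⟩
  · exact ⟨RS.simple_mem j, AddSubmonoid.subset_closure (Set.mem_range_self j)⟩

/-- `Φ(A)` is disjoint from `R⁺(J)`. -/
lemma aux_phi_disj {J : Set (Fin n)} {A : Set (EuclideanSpace ℝ (Fin n))}
    (hA : RS.IsJAntichain J A) : RS.PhiOf A ∩ RS.RposJ J = ∅ := by
  rw [Set.eq_empty_iff_forall_notMem]
  rintro x ⟨⟨⟨hxR, hxQ⟩, γ, hγA, hγle⟩, ⟨⟨_, hxcl⟩, _⟩⟩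
  obtain ⟨a, ha⟩ := (aux_mem_Qplus_iff RS x).mp hxQ
  obtain ⟨cJ, hcJ0, hcJ⟩ := aux_RJ_coords RS hxcl
  have hax : ∀ i, i ∉ J → a i = 0 := by
    intro i hi
    have := congrFun (aux_coords_unique RS (ha.symm.trans hcJ)) i
    rw [hcJ0 i hi] at this
    exact_mod_cast this
  have hγQ : γ ∈ RS.Qplus := (hA.1 hγA).2
  obtain ⟨g, hg⟩ := (aux_mem_Qplus_iff RS γ).mp hγQ
  obtain ⟨m, hm⟩ := (aux_mem_Qplus_iff RS (x - γ)).mp hγle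
  have hxeq : ∑ i, (a i : ℝ) • RS.simple i = ∑ i, ((g i + m i : ℕ) : ℝ) • RS.simple i := by
    have hsum2 : x = (∑ i, ((g i : ℕ):ℝ) • RS.simple i) + (∑ i, ((m i : ℕ):ℝ) • RS.simple i) := by
      rw [← hg, ← hm]; abel
    rw [← ha, hsum2]
    push_cast
    simp [add_smul, Finset.sum_add_distrib]
  have hcoord := aux_coords_unique RS hxeq
  have hg0 : ∀ i, i ∉ J → g i = 0 := by
    intro i hi
    have h1 := congrFun hcoord i
    have h2 : (a i : ℝ) = ((g i + m i : ℕ) : ℝ) := h1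
    have h3 : a i = g i + m i := by exact_mod_cast h2
    have := hax i hi
    omega
  have hγJ : γ ∈ RS.RposJ J := by
    constructor
    · exact ⟨hA.1 hγA |>.1, by rw [hg]; exact aux_coords_mem_RJ RS hg0⟩
    · exact hA.1 hγA
  have := hA.2.1
  rw [Set.eq_empty_iff_forall_notMem] at this
  exact this γ ⟨hγA, hγJ⟩

end Aux4
section Aux5

open RealInnerProductSpace

variable {n : ℕ} (RS : BasedRootSys n)

lemma aux_claimC {J : Set (Fin n)} {A : Set (EuclideanSpace ℝ (Fin n))}
    (hA : RS.IsJAntichain J A) :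
    ∀ N : ℕ, ∀ d : Fin n → ℕ, (∑ i, d i) = N → (∀ i, i ∉ J → d i = 0) →
    (∑ i, (d i : ℝ) • RS.simple i) ∈ RS.R →
    ∀ α ∈ RS.PhiOf A, α - (∑ i, (d i : ℝ) • RS.simple i) ∈ RS.R →
    α - (∑ i, (d i : ℝ) • RS.simple i) ∈ RS.PhiOf A := by
  intro N
  induction N using Nat.strong_induction_on with
  | _ N ih =>
  intro d hdN hdJ hδR α hαΦ hsub
  have hdisj := aux_phi_disj RS hA
  rw [Set.eq_empty_iff_forall_notMem] at hdisj
  have hAdisj := hA.2.1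
  rw [Set.eq_empty_iff_forall_notMem] at hAdisj
  set δ := ∑ i, (d i : ℝ) • RS.simple i with hδ
  rcases Nat.lt_or_ge N 2 with hNlt | hNge
  · by_cases hN0 : N = 0
    · exfalso
      subst hN0
      have hz : δ = 0 := Finset.sum_eq_zero (fun i _ => by
        rw [Finset.sum_eq_zero_iff.mp hdN i (Finset.mem_univ i)]; simp)
      rw [hz] at hδR
      exact RS.zero_not_mem hδR
    · have hN1 : N = 1 := by omega
      subst hN1
      have hexj : ∃ j, 1 ≤ d j := by
        by_contra hcon
        push_neg at hcon
        have : ∑ i, d i = 0 := Finset.sum_eq_zero (fun i _ => by have := hcon i; omega)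
        omega
      obtain ⟨j, hdj⟩ := hexj
      have hd1 : d j = 1 ∧ ∀ k, k ≠ j → d k = 0 := by
        have e2 : ∑ k, d k = d j + ∑ k ∈ Finset.univ.erase j, d k :=
          (Finset.add_sum_erase _ _ (Finset.mem_univ j)).symm
      -- from sum = 1 and d j ≥ 1: erase-sum = 0
        have hz : ∑ k ∈ Finset.univ.erase j, d k = 0 := by omega
        refine ⟨by omega, fun k hk => ?_⟩
        have := Finset.sum_eq_zero_iff.mp hz k (Finset.mem_erase.mpr ⟨hk, Finset.mem_univ k⟩)
        exact this
      have hδj : δ = RS.simple j := by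
        rw [hδ, Finset.sum_eq_single j]
        · rw [hd1.1]; simp
        · intro b _ hb
          rw [hd1.2 b hb]; simp
        · intro h; exact absurd (Finset.mem_univ j) h
      have hjJ : j ∈ J := by
        by_contra hj
        have := hdJ j hj
        omega
      obtain ⟨⟨hαR, hαQ⟩, γ, hγA, hγle⟩ := hαΦ
      obtain ⟨m, hm⟩ := (aux_mem_Qplus_iff RS (α - γ)).mp hγle
      rw [hδj] at hsub ⊢
      by_cases hmj : m j = 0
      · exfalso
        refine aux_crux RS (∑ i, m i) m rfl j hmj γ ((hA.1 hγA).1) ((hA.1 hγA).2)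
          ?_ (hA.2.2.2 γ hγA j hjJ) ?_ ?_
        · intro heq
          exact hAdisj γ ⟨hγA, heq ▸ aux_simple_mem_RposJ RS hjJ⟩
        · have he : γ + ∑ i, (m i : ℝ) • RS.simple i = α := by rw [← hm]; abel
          rw [he]
          exact hαR
        · have he : γ + (∑ i, (m i : ℝ) • RS.simple i) - RS.simple j = α - RS.simple j := by
            rw [← hm]; abel
          rw [he]
          exact hsub
      · have hmj1 : 1 ≤ m j := by omega
        set m' := Function.update m j (m j - 1) with hm'
        have hsplit : ∑ k, (m k : ℝ) • RS.simple k
            = (∑ k, (m' k : ℝ) • RS.simple k) + RS.simple j := aux_sum_split RS m j hmj1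
        have hαeq : α = γ + ∑ k, (m k : ℝ) • RS.simple k := by rw [← hm]; abel
        have he : α - RS.simple j = γ + ∑ k, (m' k : ℝ) • RS.simple k := by
          rw [hαeq, hsplit]; abel
        refine ⟨⟨hsub, ?_⟩, γ, hγA, ?_⟩
        · rw [he]
          exact AddSubmonoid.add_mem _ ((hA.1 hγA).2) ((aux_mem_Qplus_iff RS _).mpr ⟨m', rfl⟩)
        · show α - RS.simple j - γ ∈ RS.Qplus
          have he2 : α - RS.simple j - γ = ∑ k, (m' k : ℝ) • RS.simple k := by
            rw [hαeq, hsplit]; abel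
          rw [he2]
          exact (aux_mem_Qplus_iff RS _).mpr ⟨m', rfl⟩
  · -- N ≥ 2
    have hδδ : 0 < ⟪δ, δ⟫ := aux_inner_self_pos RS hδR
    have hexi : ∃ i, 0 < (d i : ℝ) * ⟪RS.simple i, δ⟫ := by
      by_contra hcon
      push_neg at hcon
      have he : ⟪δ, δ⟫ = ∑ i, (d i : ℝ) * ⟪RS.simple i, δ⟫ := by
        nth_rewrite 1 [hδ]
        rw [sum_inner]
        simp only [real_inner_smul_left]
      have : ⟪δ, δ⟫ ≤ 0 := by
        rw [he]
        exact Finset.sum_nonpos (fun i _ => hcon i)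
      linarith
    obtain ⟨i, hi⟩ := hexi
    have hdi : 1 ≤ d i := by
      by_contra h
      push_neg at h
      have h0 : d i = 0 := by omega
      rw [h0] at hi
      simp at hi
    have hiδ : 0 < ⟪RS.simple i, δ⟫ := by
      by_contra h
      push_neg at h
      have : (d i : ℝ) * ⟪RS.simple i, δ⟫ ≤ 0 :=
        mul_nonpos_of_nonneg_of_nonpos (Nat.cast_nonneg _) h
      linarith
    have hiJ : i ∈ J := by
      by_contra h
      have := hdJ i h
      omega
    have hδi : δ - RS.simple i ∈ RS.R := by
      have hp : 0 < ⟪δ, RS.simple i⟫ := by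
        rw [real_inner_comm δ (RS.simple i)] at hiδ
        exact hiδ
      rcases aux_key RS hδR (RS.simple_mem i) hp with heq | hmem
      · exfalso
        have h4 : ∑ k, (d k : ℝ) • RS.simple k
            = ∑ k, (if k = i then (1:ℝ) else 0) • RS.simple k := by
          rw [← aux_single_rep RS i, ← hδ]
          exact heq
        have h5 := aux_coords_unique RS h4
        have hdk : ∀ k, d k = if k = i then 1 else 0 := by
          intro k
          have hk := congrFun h5 k
          by_cases hki : k = i
          · rw [if_pos hki] at hk ⊢; exact_mod_cast hk
          · rw [if_neg hki] at hk ⊢; exact_mod_cast hk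
        have : ∑ k, d k = 1 := by
          rw [Finset.sum_congr rfl (fun k _ => hdk k)]
          simp
        omega
      · exact hmem
    set d' := Function.update d i (d i - 1) with hd'
    have hsplitd : ∑ k, (d k : ℝ) • RS.simple k
        = (∑ k, (d' k : ℝ) • RS.simple k) + RS.simple i := aux_sum_split RS d i hdi
    have hδ'eq : ∑ k, (d' k : ℝ) • RS.simple k = δ - RS.simple i := by
      rw [hδ, hsplitd]; abel
    have hδ'R : ∑ k, (d' k : ℝ) • RS.simple k ∈ RS.R := by
      rw [hδ'eq]; exact hδi
    have hd'J : ∀ k, k ∉ J → d' k = 0 := by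
      intro k hk
      by_cases hki : k = i
      · subst hki; exact absurd hiJ hk
      · rw [hd', Function.update_of_ne hki]; exact hdJ k hk
    have hd'sum : ∑ k, d' k = N - 1 := by
      have e1 : ∑ k, d' k = (d i - 1) + ∑ k ∈ Finset.univ \ {i}, d k := by
        rw [hd', Finset.sum_update_of_mem (Finset.mem_univ i)]
      have e2 : ∑ k, d k = d i + ∑ k ∈ Finset.univ \ {i}, d k := by
        rw [← Finset.erase_eq]
        exact (Finset.add_sum_erase _ _ (Finset.mem_univ i)).symm
      omega
    set e : Fin n → ℕ := fun k => if k = i then 1 else 0 with he_def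
    have heJ : ∀ k, k ∉ J → e k = 0 := by
      intro k hk
      by_cases hki : k = i
      · subst hki; exact absurd hiJ hk
      · simp [he_def, hki]
    have hesum : ∑ k, e k = 1 := by simp [he_def]
    have heeq : ∑ k, (e k : ℝ) • RS.simple k = RS.simple i := by
      have hcast : ∀ k, ((e k : ℕ) : ℝ) = if k = i then (1:ℝ) else 0 := by
        intro k
        by_cases hki : k = i <;> simp [he_def, hki]
      calc ∑ k, (e k : ℝ) • RS.simple k
          = ∑ k, (if k = i then (1:ℝ) else 0) • RS.simple k :=
            Finset.sum_congr rfl (fun k _ => by rw [hcast k])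
        _ = RS.simple i := (aux_single_rep RS i).symm
    have heR : ∑ k, (e k : ℝ) • RS.simple k ∈ RS.R := by
      rw [heeq]; exact RS.simple_mem i
    have hαR : α ∈ RS.R := hαΦ.1.1
    have hδ'RposJ : δ - RS.simple i ∈ RS.RposJ J := by
      refine ⟨⟨hδi, ?_⟩, hδi, ?_⟩
      · rw [← hδ'eq]
        exact aux_coords_mem_RJ RS hd'J
      · rw [← hδ'eq]
        exact (aux_mem_Qplus_iff RS _).mpr ⟨d', rfl⟩
    have h3t : (α - δ) + (δ - RS.simple i) ∈ RS.R ∨ (α - δ) + RS.simple i ∈ RS.R := by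
      refine aux_three RS hsub hδi (RS.simple_mem i) ?_ ?_ ?_ ?_
      · have he3 : (α - δ) + (δ - RS.simple i) + RS.simple i = α := by abel
        rw [he3]; exact hαR
      · have he3 : (δ - RS.simple i) + RS.simple i = δ := by abel
        rw [he3]; exact aux_root_ne_zero RS hδR
      · intro heq
        have hαsi : α = RS.simple i := by
          have h'' : (α - δ) - (-(δ - RS.simple i)) = 0 := sub_eq_zero_of_eq heq
          have : α - RS.simple i = 0 := by rw [← h'']; abel
          rw [← sub_eq_zero]; exact this
        exact hdisj α ⟨hαΦ, hαsi ▸ aux_simple_mem_RposJ RS hiJ⟩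
      · intro heq
        have hαδ' : α = δ - RS.simple i := by
          have h'' : (α - δ) - (-RS.simple i) = 0 := sub_eq_zero_of_eq heq
          have : α - (δ - RS.simple i) = 0 := by rw [← h'']; abel
          rw [← sub_eq_zero]; exact this
        exact hdisj α ⟨hαΦ, hαδ' ▸ hδ'RposJ⟩
    rcases h3t with hc1 | hc2
    · -- α - s i ∈ R
      have hm1 : α - RS.simple i ∈ RS.R := by
        have he3 : (α - δ) + (δ - RS.simple i) = α - RS.simple i := by abel
        rw [← he3]; exact hc1
      have hstep1 : α - (∑ k, (e k : ℝ) • RS.simple k) ∈ RS.PhiOf A :=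
        ih 1 (by omega) e hesum heJ heR α hαΦ (by rw [heeq]; exact hm1)
      rw [heeq] at hstep1
      have hstep2 := ih (N - 1) (by omega) d' hd'sum hd'J hδ'R (α - RS.simple i) hstep1 ?_
      · have he4 : α - RS.simple i - (∑ k, (d' k : ℝ) • RS.simple k) = α - δ := by
          rw [hδ'eq]; abel
        rw [he4] at hstep2
        exact hstep2
      · have he4 : α - RS.simple i - (∑ k, (d' k : ℝ) • RS.simple k) = α - δ := by
          rw [hδ'eq]; abel
        rw [he4]
        exact hsub
    · -- α - (δ - s i) ∈ R
      have hm2 : α - (δ - RS.simple i) ∈ RS.R := by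
        have he3 : (α - δ) + RS.simple i = α - (δ - RS.simple i) := by abel
        rw [← he3]; exact hc2
      have hstep1 : α - (∑ k, (d' k : ℝ) • RS.simple k) ∈ RS.PhiOf A :=
        ih (N - 1) (by omega) d' hd'sum hd'J hδ'R α hαΦ (by rw [hδ'eq]; exact hm2)
      rw [hδ'eq] at hstep1
      have hstep2 := ih 1 (by omega) e hesum heJ heR (α - (δ - RS.simple i)) hstep1 ?_
      · have he4 : α - (δ - RS.simple i) - (∑ k, (e k : ℝ) • RS.simple k) = α - δ := by
          rw [heeq]; abel
        rw [he4] at hstep2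
        exact hstep2
      · have he4 : α - (δ - RS.simple i) - (∑ k, (e k : ℝ) • RS.simple k) = α - δ := by
          rw [heeq]; abel
        rw [he4]
        exact hsub

end Aux5

/-- If `A` is a `J`-antichain, then `Φ(A)` is a `J`-ideal. -/
theorem stmt_4 {n : ℕ} (RS : BasedRootSys n) (J : Set (Fin n))
    (A : Set (EuclideanSpace ℝ (Fin n))) (hA : RS.IsJAntichain J A) :
    RS.IsJIdeal J (RS.PhiOf A) := by
  refine ⟨fun x hx => hx.1, aux_phi_disj RS hA, ?_⟩
  intro α hαΦ β hβ hsum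
  have hposcase : β ∈ RS.Qplus → α + β ∈ RS.PhiOf A := by
    intro hq
    obtain ⟨⟨hαR, hαQ⟩, γ, hγA, hγle⟩ := hαΦ
    refine ⟨⟨hsum, AddSubmonoid.add_mem _ hαQ hq⟩, γ, hγA, ?_⟩
    show α + β - γ ∈ RS.Qplus
    have he : α + β - γ = (α - γ) + β := by abel
    rw [he]
    exact AddSubmonoid.add_mem _ hγle hq
  rcases hβ with hβpos | hβJ
  · exact hposcase hβpos.2
  · by_cases hq : β ∈ RS.Qplus
    · exact hposcase hq
    · have hβR : β ∈ RS.R := hβJ.1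
      have hnegQ : -β ∈ RS.Qplus := (RS.pos_or_neg β hβR).resolve_left hq
      obtain ⟨d, hd⟩ := (aux_mem_Qplus_iff RS (-β)).mp hnegQ
      obtain ⟨cJ, hcJ0, hcJ⟩ := aux_RJ_coords RS hβJ.2
      have hdJ : ∀ i, i ∉ J → d i = 0 := by
        intro i hi
        have hneg : -β = ∑ k, (-(cJ k)) • RS.simple k := by
          rw [hcJ]
          simp only [neg_smul, Finset.sum_neg_distrib]
        have hu := congrFun (aux_coords_unique RS (hd.symm.trans hneg)) i
        rw [hcJ0 i hi] at hu
        simp only [neg_zero] at hu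
        exact_mod_cast hu
      have hδR : ∑ k, (d k : ℝ) • RS.simple k ∈ RS.R := by
        rw [← hd]
        exact RS.neg_mem β hβR
      have hsub : α - (∑ k, (d k : ℝ) • RS.simple k) ∈ RS.R := by
        rw [← hd, sub_neg_eq_add]
        exact hsum
      have := aux_claimC RS hA (∑ k, d k) d rfl hdJ hδR α hαΦ hsub
      rw [← hd, sub_neg_eq_add] at this
      exact this
end

section
/- The map A ↦ Φ(A) = {α ∈ R⁺ : ∃ β ∈ A, α ≥ β} is a bijection between the set of J-antichains in R⁺ and the set of J-ideals in R⁺, with inverse sending an ideal Φ to its set of minimal elements. -/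
open RealInnerProductSpace

namespace BasedRootSys

variable {n : ℕ} (RS : BasedRootSys n)

lemma span_simple_top : ⊤ ≤ Submodule.span ℝ (Set.range RS.simple) := by
  have hQ : (AddSubmonoid.closure (Set.range RS.simple) : AddSubmonoid _) ≤
      (Submodule.span ℝ (Set.range RS.simple)).toAddSubmonoid :=
    AddSubmonoid.closure_le.mpr Submodule.subset_span
  have hR : RS.R ⊆ (Submodule.span ℝ (Set.range RS.simple) : Set _) := by
    intro x hx
    rcases RS.pos_or_neg x hx with h | h
    · exact hQ h
    · have : -x ∈ Submodule.span ℝ (Set.range RS.simple) := hQ h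
      simpa using (Submodule.span ℝ (Set.range RS.simple)).neg_mem this
  calc (⊤ : Submodule ℝ _) = Submodule.span ℝ RS.R := RS.spans.symm
    _ ≤ Submodule.span ℝ (Set.range RS.simple) := Submodule.span_le.mpr hR

/-- The simple roots as a basis. -/
noncomputable def bas : Module.Basis (Fin n) ℝ (EuclideanSpace ℝ (Fin n)) :=
  Module.Basis.mk RS.simple_indep RS.span_simple_top

@[simp] lemma bas_apply (i : Fin n) : RS.bas i = RS.simple i := Module.Basis.mk_apply _ _ _

/-- Coordinates with respect to the simple roots. -/
noncomputable def co (x : EuclideanSpace ℝ (Fin n)) (i : Fin n) : ℝ := RS.bas.repr x i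

lemma co_add (x y : EuclideanSpace ℝ (Fin n)) (i : Fin n) :
    RS.co (x + y) i = RS.co x i + RS.co y i := by simp [co]

lemma co_sub (x y : EuclideanSpace ℝ (Fin n)) (i : Fin n) :
    RS.co (x - y) i = RS.co x i - RS.co y i := by simp [co]

lemma co_neg (x : EuclideanSpace ℝ (Fin n)) (i : Fin n) : RS.co (-x) i = - RS.co x i := by
  simp [co]

@[simp] lemma co_zero (i : Fin n) : RS.co 0 i = 0 := by simp [co]

lemma co_simple (i k : Fin n) : RS.co (RS.simple i) k = if i = k then 1 else 0 := by
  have : RS.co (RS.bas i) k = _ := rfl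
  rw [co, ← RS.bas_apply, Module.Basis.repr_self, Finsupp.single_apply]

lemma ext_co {x y : EuclideanSpace ℝ (Fin n)} (h : ∀ i, RS.co x i = RS.co y i) : x = y := by
  have : RS.bas.repr x = RS.bas.repr y := Finsupp.ext h
  exact RS.bas.repr.injective this

lemma eq_zero_of_co {x : EuclideanSpace ℝ (Fin n)} (h : ∀ i, RS.co x i = 0) : x = 0 :=
  RS.ext_co (by simpa using h)

/-- Characterization of `Q⁺` by coordinates. -/
lemma mem_Qplus_iff {x : EuclideanSpace ℝ (Fin n)} :
    x ∈ RS.Qplus ↔ ∀ i, ∃ m : ℕ, RS.co x i = m := by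
  constructor
  · intro hx
    induction hx using AddSubmonoid.closure_induction with
    | mem y hy =>
      rcases hy with ⟨i0, rfl⟩
      intro i
      rw [co_simple]
      by_cases h : i0 = i
      · exact ⟨1, by simp [h]⟩
      · exact ⟨0, by simp [h]⟩
    | zero => exact fun i => ⟨0, by simp⟩
    | add x y _ _ hx hy =>
      intro i
      rcases hx i with ⟨m1, h1⟩; rcases hy i with ⟨m2, h2⟩
      exact ⟨m1 + m2, by rw [co_add, h1, h2]; push_cast; ring⟩
  · intro h
    have hx : x = ∑ i, RS.co x i • RS.simple i := by
      have := RS.bas.sum_repr x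
      simp only [bas_apply] at this
      exact this.symm
    rw [hx]
    apply sum_mem
    intro i _
    rcases h i with ⟨m, hm⟩
    rw [hm]
    rw [Nat.cast_smul_eq_nsmul]
    exact nsmul_mem (AddSubmonoid.subset_closure (Set.mem_range_self i)) m

lemma co_nonneg {x : EuclideanSpace ℝ (Fin n)} (hx : x ∈ RS.Qplus) (i : Fin n) :
    0 ≤ RS.co x i := by
  rcases (RS.mem_Qplus_iff.mp hx) i with ⟨m, hm⟩
  rw [hm]; positivity

lemma simple_mem_Qplus (i : Fin n) : RS.simple i ∈ RS.Qplus :=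
  AddSubmonoid.subset_closure (Set.mem_range_self i)

lemma Qplus_pointed {x : EuclideanSpace ℝ (Fin n)} (hx : x ∈ RS.Qplus) (hx' : -x ∈ RS.Qplus) :
    x = 0 := by
  apply RS.eq_zero_of_co
  intro i
  have h1 := RS.co_nonneg hx i
  have h2 := RS.co_nonneg hx' i
  rw [co_neg] at h2
  linarith

end BasedRootSys
namespace BasedRootSys

variable {n : ℕ} (RS : BasedRootSys n)

lemma co_eq_zero_of_memJ {J : Set (Fin n)} {x : EuclideanSpace ℝ (Fin n)}
    (hx : x ∈ AddSubgroup.closure (RS.simple '' J)) : ∀ i ∉ J, RS.co x i = 0 := by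
  induction hx using AddSubgroup.closure_induction with
  | mem y hy =>
    rcases hy with ⟨j, hj, rfl⟩
    intro i hi
    rw [co_simple]
    have : j ≠ i := fun h => hi (h ▸ hj)
    simp [this]
  | zero => intro i _; simp
  | add x y _ _ hx hy => intro i hi; rw [co_add, hx i hi, hy i hi]; ring
  | neg x _ hx => intro i hi; rw [co_neg, hx i hi]; ring

lemma memJ_of_co {J : Set (Fin n)} {x : EuclideanSpace ℝ (Fin n)} (hx : x ∈ RS.Qplus)
    (h : ∀ i ∉ J, RS.co x i = 0) : x ∈ AddSubgroup.closure (RS.simple '' J) := by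
  have hx' : x = ∑ i, RS.co x i • RS.simple i := by
    have := RS.bas.sum_repr x
    simp only [bas_apply] at this
    exact this.symm
  rw [hx']
  apply sum_mem
  intro i _
  by_cases hi : i ∈ J
  · rcases (RS.mem_Qplus_iff.mp hx) i with ⟨m, hm⟩
    rw [hm, Nat.cast_smul_eq_nsmul]
    exact nsmul_mem (AddSubgroup.subset_closure (Set.mem_image_of_mem _ hi)) m
  · rw [h i hi, zero_smul]
    exact zero_mem _

lemma inner_self_pos_of_mem {α : EuclideanSpace ℝ (Fin n)} (hα : α ∈ RS.R) :
    (0:ℝ) < ⟪α, α⟫ := by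
  have hne : α ≠ 0 := fun h => RS.zero_not_mem (h ▸ hα)
  have h0 : 0 < ‖α‖ := norm_pos_iff.mpr hne
  rw [real_inner_self_eq_norm_mul_norm]
  exact mul_pos h0 h0

lemma root_ne_zero {α : EuclideanSpace ℝ (Fin n)} (hα : α ∈ RS.R) : α ≠ 0 :=
  fun h => RS.zero_not_mem (h ▸ hα)

/-- Strict Cauchy–Schwarz for non-proportional roots. -/
lemma inner_sq_lt {α β : EuclideanSpace ℝ (Fin n)} (hα : α ∈ RS.R) (hβ : β ∈ RS.R)
    (h1 : α ≠ β) (h2 : α ≠ -β) : ⟪α, β⟫ ^ 2 < ⟪α, α⟫ * ⟪β, β⟫ := by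
  have hβ0 : β ≠ 0 := RS.root_ne_zero hβ
  have hb : ‖β‖ ≠ 0 := norm_ne_zero_iff.mpr hβ0
  have key : ∀ γ : EuclideanSpace ℝ (Fin n), γ ∈ RS.R → γ ≠ β → γ ≠ -β →
      ⟪γ, β⟫ < ‖γ‖ * ‖β‖ := by
    intro γ hγ hγ1 hγ2
    rw [inner_lt_norm_mul_iff_real]
    intro heq
    have hγeq : γ = ((‖β‖)⁻¹ * ‖γ‖) • β := by
      rw [← smul_smul, ← heq, inv_smul_smul₀ hb]
    have hmem : ((‖β‖)⁻¹ * ‖γ‖) • β ∈ RS.R := by rw [← hγeq]; exact hγ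
    rcases RS.reduced β hβ _ hmem with ht | ht
    · rw [ht, one_smul] at hγeq; exact hγ1 hγeq
    · rw [ht, neg_one_smul] at hγeq; exact hγ2 hγeq
  have hA := key α hα h1 h2
  have hA' := key (-α) (RS.neg_mem α hα) (by intro h; exact h2 (by rw [← h]; simp))
      (by intro h; exact h1 (by have := congrArg Neg.neg h; simpa using this))
  rw [inner_neg_left, norm_neg] at hA'
  have habs : ⟪α, β⟫ ^ 2 < (‖α‖ * ‖β‖) ^ 2 := by
    apply sq_lt_sq' <;> linarith
  calc ⟪α, β⟫ ^ 2 < (‖α‖ * ‖β‖) ^ 2 := habs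
    _ = ⟪α, α⟫ * ⟪β, β⟫ := by
      rw [real_inner_self_eq_norm_mul_norm, real_inner_self_eq_norm_mul_norm]; ring

end BasedRootSys
namespace BasedRootSys

variable {n : ℕ} (RS : BasedRootSys n)

/-- If two roots have positive inner product, their difference is a root. -/
lemma sub_mem_of_inner_pos {α β : EuclideanSpace ℝ (Fin n)} (hα : α ∈ RS.R) (hβ : β ∈ RS.R)
    (hip : 0 < ⟪α, β⟫) (hne : α ≠ β) : α - β ∈ RS.R := by
  have ha : (0:ℝ) < ⟪α, α⟫ := RS.inner_self_pos_of_mem hα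
  have hb : (0:ℝ) < ⟪β, β⟫ := RS.inner_self_pos_of_mem hβ
  have hne2 : α ≠ -β := by
    intro h
    rw [h, inner_neg_left] at hip
    linarith
  obtain ⟨k₁, hk₁⟩ := RS.crystal α hα β hβ
  obtain ⟨k₂, hk₂⟩ := RS.crystal β hβ α hα
  have e1 : 2 * ⟪α, β⟫ = (k₁ : ℝ) * ⟪α, α⟫ := (div_eq_iff ha.ne').mp hk₁
  have e2 : 2 * ⟪α, β⟫ = (k₂ : ℝ) * ⟪β, β⟫ := by
    have h := (div_eq_iff hb.ne').mp hk₂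
    rw [real_inner_comm β α]
    exact h
  have hk₁pos : 1 ≤ k₁ := by
    have : (0:ℝ) < (k₁ : ℝ) := by
      have h2 : (0:ℝ) < 2 * ⟪α, β⟫ := by linarith
      nlinarith
    have h0 : (0:ℤ) < k₁ := by exact_mod_cast this
    omega
  have hk₂pos : 1 ≤ k₂ := by
    have : (0:ℝ) < (k₂ : ℝ) := by
      have h2 : (0:ℝ) < 2 * ⟪α, β⟫ := by linarith
      nlinarith
    have h0 : (0:ℤ) < k₂ := by exact_mod_cast this
    omega
  by_cases h1 : k₁ = 1
  · have hr := RS.reflect_mem α hα β hβ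
    rw [hk₁, h1] at hr
    simp only [Int.cast_one, one_smul] at hr
    have := RS.neg_mem _ hr
    simpa [neg_sub] using this
  by_cases h2 : k₂ = 1
  · have hr := RS.reflect_mem β hβ α hα
    rw [hk₂, h2] at hr
    simpa using hr
  -- both ≥ 2 : contradiction with Cauchy–Schwarz
  exfalso
  have hk₁2 : (2:ℤ) ≤ k₁ := by omega
  have hk₂2 : (2:ℤ) ≤ k₂ := by omega
  have hcs := RS.inner_sq_lt hα hβ hne hne2
  have hk₁R : (2:ℝ) ≤ (k₁:ℝ) := by exact_mod_cast hk₁2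
  have hk₂R : (2:ℝ) ≤ (k₂:ℝ) := by exact_mod_cast hk₂2
  have hprod : (4:ℝ) ≤ (k₁:ℝ)*(k₂:ℝ) := by nlinarith
  have e3 : 4*(⟪α,β⟫^2) = ((k₁:ℝ)*(k₂:ℝ))*(⟪α,α⟫*⟪β,β⟫) := by
    calc 4*(⟪α,β⟫^2) = (2*⟪α,β⟫)*(2*⟪α,β⟫) := by ring
      _ = ((k₁:ℝ)*⟪α,α⟫)*((k₂:ℝ)*⟪β,β⟫) := by rw [← e1, ← e2]
      _ = ((k₁:ℝ)*(k₂:ℝ))*(⟪α,α⟫*⟪β,β⟫) := by ring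
  have h4ab : 4*(⟪α,α⟫*⟪β,β⟫) ≤ ((k₁:ℝ)*(k₂:ℝ))*(⟪α,α⟫*⟪β,β⟫) :=
    mul_le_mul_of_nonneg_right hprod (le_of_lt (mul_pos ha hb))
  nlinarith

/-- If two roots have negative inner product, their sum is a root. -/
lemma add_mem_of_inner_neg {α β : EuclideanSpace ℝ (Fin n)} (hα : α ∈ RS.R) (hβ : β ∈ RS.R)
    (hip : ⟪α, β⟫ < 0) (hne : α ≠ -β) : α + β ∈ RS.R := by
  have h := RS.sub_mem_of_inner_pos hα (RS.neg_mem β hβ)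
    (by rw [inner_neg_right]; linarith) hne
  simpa [sub_neg_eq_add] using h

lemma root_pm {α : EuclideanSpace ℝ (Fin n)} (hα : α ∈ RS.R) :
    α ∈ RS.Qplus ∨ -α ∈ RS.Qplus := RS.pos_or_neg α hα

lemma co_zero_or_one_le {x : EuclideanSpace ℝ (Fin n)} (hx : x ∈ RS.Qplus) (i : Fin n) :
    RS.co x i = 0 ∨ 1 ≤ RS.co x i := by
  rcases (RS.mem_Qplus_iff.mp hx) i with ⟨m, hm⟩
  rcases Nat.eq_zero_or_pos m with h | h
  · left; rw [hm, h]; simp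
  · right; rw [hm]; exact_mod_cast h

/-- Two distinct simple roots have nonpositive inner product. -/
lemma simple_inner_nonpos {i j : Fin n} (hij : i ≠ j) :
    ⟪RS.simple i, RS.simple j⟫ ≤ 0 := by
  by_contra h
  push_neg at h
  have hne : RS.simple i ≠ RS.simple j := fun hh => hij (RS.simple_indep.injective hh)
  have hroot := RS.sub_mem_of_inner_pos (RS.simple_mem i) (RS.simple_mem j) h hne
  have hco : ∀ k, RS.co (RS.simple i - RS.simple j) k =
      (if i = k then (1:ℝ) else 0) - (if j = k then 1 else 0) := by
    intro k; rw [co_sub, co_simple, co_simple]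
  rcases RS.root_pm hroot with hq | hq
  · have := RS.co_nonneg hq j
    rw [hco j, if_neg hij, if_pos rfl] at this
    linarith
  · have := RS.co_nonneg hq i
    rw [co_neg, hco i, if_pos rfl, if_neg (fun hh : j = i => hij hh.symm)] at this
    linarith

lemma inner_nonneg_of_Qplus {x y : EuclideanSpace ℝ (Fin n)} (hx : x ∈ RS.Qplus)
    (h : ∀ i, 1 ≤ RS.co x i → 0 ≤ ⟪y, RS.simple i⟫) : 0 ≤ ⟪y, x⟫ := by
  have hx' : x = ∑ i, RS.co x i • RS.simple i := by
    have := RS.bas.sum_repr x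
    simp only [bas_apply] at this
    exact this.symm
  rw [hx', inner_sum]
  apply Finset.sum_nonneg
  intro i _
  rw [real_inner_smul_right]
  rcases RS.co_zero_or_one_le hx i with h0 | h1
  · rw [h0]; simp
  · exact mul_nonneg (by linarith) (h i h1)

lemma exists_coord_inner_neg {x y : EuclideanSpace ℝ (Fin n)} (hx : x ∈ RS.Qplus)
    (h : ⟪y, x⟫ < 0) : ∃ i, 1 ≤ RS.co x i ∧ ⟪y, RS.simple i⟫ < 0 := by
  by_contra hc
  push_neg at hc
  have := RS.inner_nonneg_of_Qplus hx (fun i hi => hc i hi)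
  linarith

lemma exists_coord_inner_pos {x y : EuclideanSpace ℝ (Fin n)} (hx : x ∈ RS.Qplus)
    (h : 0 < ⟪y, x⟫) : ∃ i, 1 ≤ RS.co x i ∧ 0 < ⟪y, RS.simple i⟫ := by
  have h' : ⟪-y, x⟫ < 0 := by rw [inner_neg_left]; linarith
  rcases RS.exists_coord_inner_neg hx h' with ⟨i, h1, h2⟩
  rw [inner_neg_left] at h2
  exact ⟨i, h1, by linarith⟩

lemma inner_self_pos_of_ne_zero {x : EuclideanSpace ℝ (Fin n)} (hx : x ≠ 0) :
    (0:ℝ) < ⟪x, x⟫ := by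
  have h0 : 0 < ‖x‖ := norm_pos_iff.mpr hx
  rw [real_inner_self_eq_norm_mul_norm]
  exact mul_pos h0 h0

end BasedRootSys
namespace BasedRootSys

variable {n : ℕ} (RS : BasedRootSys n)

/-- Height: sum of the coordinates. -/
noncomputable def ht (x : EuclideanSpace ℝ (Fin n)) : ℝ := ∑ i, RS.co x i

lemma ht_sub (x y : EuclideanSpace ℝ (Fin n)) : RS.ht (x - y) = RS.ht x - RS.ht y := by
  simp [ht, co_sub, Finset.sum_sub_distrib]

lemma ht_simple (i : Fin n) : RS.ht (RS.simple i) = 1 := by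
  simp [ht, co_simple]

lemma ht_nonneg {x : EuclideanSpace ℝ (Fin n)} (hx : x ∈ RS.Qplus) : 0 ≤ RS.ht x :=
  Finset.sum_nonneg (fun i _ => RS.co_nonneg hx i)

lemma eq_zero_of_ht {x : EuclideanSpace ℝ (Fin n)} (hx : x ∈ RS.Qplus) (h : RS.ht x ≤ 0) :
    x = 0 := by
  have h0 : RS.ht x = 0 := le_antisymm h (RS.ht_nonneg hx)
  apply RS.eq_zero_of_co
  intro i
  have := (Finset.sum_eq_zero_iff_of_nonneg (fun i _ => RS.co_nonneg hx i)).mp h0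
  exact this i (Finset.mem_univ i)

lemma co_le_ht {x : EuclideanSpace ℝ (Fin n)} (hx : x ∈ RS.Qplus) (i : Fin n) :
    RS.co x i ≤ RS.ht x :=
  Finset.single_le_sum (f := fun k => RS.co x k) (fun k _ => RS.co_nonneg hx k)
    (Finset.mem_univ i)

lemma sub_simple_mem_Qplus {x : EuclideanSpace ℝ (Fin n)} (hx : x ∈ RS.Qplus) {i : Fin n}
    (hi : 1 ≤ RS.co x i) : x - RS.simple i ∈ RS.Qplus := by
  rw [mem_Qplus_iff]
  intro k
  rcases (RS.mem_Qplus_iff.mp hx) k with ⟨m, hm⟩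
  rw [co_sub, hm, co_simple]
  by_cases h : i = k
  · subst h
    have hm1 : 1 ≤ m := by
      rw [hm] at hi
      exact_mod_cast hi
    exact ⟨m - 1, by rw [if_pos rfl]; push_cast [hm1]; ring⟩
  · exact ⟨m, by rw [if_neg h]; ring⟩

lemma le_refl' (x : EuclideanSpace ℝ (Fin n)) : RS.le x x := by
  unfold le; simp

lemma le_trans' {x y z : EuclideanSpace ℝ (Fin n)} (h1 : RS.le x y) (h2 : RS.le y z) :
    RS.le x z := by
  unfold le at *
  have := add_mem h2 h1
  simpa using this

lemma le_antisymm' {x y : EuclideanSpace ℝ (Fin n)} (h1 : RS.le x y) (h2 : RS.le y x) :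
    x = y := by
  unfold le at *
  have h3 : -(y - x) ∈ RS.Qplus := by simpa [neg_sub] using h2
  have := RS.Qplus_pointed h1 h3
  have := sub_eq_zero.mp this
  exact this.symm

lemma le_add_of_le {x y z : EuclideanSpace ℝ (Fin n)} (h : RS.le x y) (hz : z ∈ RS.Qplus) :
    RS.le x (y + z) := by
  unfold le at *
  have h2 : (y - x) + z ∈ RS.Qplus := add_mem h hz
  have : y + z - x = (y - x) + z := by abel
  rw [this]
  exact h2

end BasedRootSys
namespace BasedRootSys

variable {n : ℕ} (RS : BasedRootSys n)

lemma simple_sub_simple_not_root {i j : Fin n} (hij : i ≠ j) :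
    RS.simple i - RS.simple j ∉ RS.R := by
  intro hroot
  have hco : ∀ k, RS.co (RS.simple i - RS.simple j) k =
      (if i = k then (1:ℝ) else 0) - (if j = k then 1 else 0) := by
    intro k; rw [co_sub, co_simple, co_simple]
  rcases RS.root_pm hroot with hq | hq
  · have := RS.co_nonneg hq j
    rw [hco j, if_neg hij, if_pos rfl] at this
    linarith
  · have := RS.co_nonneg hq i
    rw [co_neg, hco i, if_pos rfl, if_neg (fun hh : j = i => hij hh.symm)] at this
    linarith

lemma neg_simple_not_Qplus (i : Fin n) : -RS.simple i ∉ RS.Qplus := by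
  intro h
  have := RS.co_nonneg h i
  rw [co_neg, co_simple, if_pos rfl] at this
  linarith

/-- The key geometric lemma: a `j`-minimal positive root stays `j`-minimal
after adding a simple root `i ≠ j` with negative inner product. -/
lemma zeta_kill {β : EuclideanSpace ℝ (Fin n)} {i j : Fin n} (hβR : β ∈ RS.R)
    (hβQ : β ∈ RS.Qplus) (hβj : ⟪β, RS.simple j⟫ ≤ 0) (hβjR : β - RS.simple j ∉ RS.R)
    (hij : i ≠ j) (hβi : ⟪β, RS.simple i⟫ < 0) :
    β + RS.simple i - RS.simple j ∉ RS.R := by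
  intro hζ
  set ζ := β + RS.simple i - RS.simple j with hζdef
  have hai : (0:ℝ) < ⟪RS.simple i, RS.simple i⟫ := RS.inner_self_pos_of_mem (RS.simple_mem i)
  have haj : (0:ℝ) < ⟪RS.simple j, RS.simple j⟫ := RS.inner_self_pos_of_mem (RS.simple_mem j)
  have hββ : (0:ℝ) < ⟪β, β⟫ := RS.inner_self_pos_of_mem hβR
  have hβnei : β ≠ RS.simple i := by
    intro h; rw [h] at hβi; linarith
  have hβnenegi : β ≠ -RS.simple i := by
    intro h; exact RS.neg_simple_not_Qplus i (h ▸ hβQ)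
  have hβnej : β ≠ RS.simple j := by
    intro h; rw [h] at hβj; linarith
  have hcs := RS.inner_sq_lt hβR (RS.simple_mem i) hβnei hβnenegi
  have hji : ⟪RS.simple j, RS.simple i⟫ ≤ 0 := RS.simple_inner_nonpos (fun h => hij h.symm)
  have hdich : -⟪β, RS.simple i⟫ < ⟪β, β⟫ ∨ -⟪β, RS.simple i⟫ < ⟪RS.simple i, RS.simple i⟫ := by
    by_contra h
    push_neg at h
    nlinarith [h.1, h.2]
  rcases hdich with hcase | hcase
  · -- ⟪ζ, β⟫ > 0, so ζ - β = simple i - simple j would be a root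
    have hinner : (0:ℝ) < ⟪ζ, β⟫ := by
      have : ⟪ζ, β⟫ = ⟪β, β⟫ + ⟪RS.simple i, β⟫ - ⟪RS.simple j, β⟫ := by
        rw [hζdef, inner_sub_left, inner_add_left]
      have e1 : ⟪RS.simple i, β⟫ = ⟪β, RS.simple i⟫ := real_inner_comm _ _
      have e2 : ⟪RS.simple j, β⟫ = ⟪β, RS.simple j⟫ := real_inner_comm _ _
      rw [this, e1, e2]
      linarith
    have hne : ζ ≠ β := by
      intro h
      have : RS.simple i = RS.simple j := by
        have := sub_eq_zero.mpr h
        rw [hζdef] at this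
        have h2 : RS.simple i - RS.simple j = 0 := by
          rw [← this]; abel
        have := sub_eq_zero.mp h2
        exact this
      exact hij (RS.simple_indep.injective this)
    have hroot := RS.sub_mem_of_inner_pos hζ hβR hinner hne
    have : ζ - β = RS.simple i - RS.simple j := by rw [hζdef]; abel
    rw [this] at hroot
    exact RS.simple_sub_simple_not_root hij hroot
  · -- ⟪ζ, simple i⟫ > 0, so ζ - simple i = β - simple j would be a root
    have hinner : (0:ℝ) < ⟪ζ, RS.simple i⟫ := by
      have : ⟪ζ, RS.simple i⟫ = ⟪β, RS.simple i⟫ + ⟪RS.simple i, RS.simple i⟫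
          - ⟪RS.simple j, RS.simple i⟫ := by
        rw [hζdef, inner_sub_left, inner_add_left]
      rw [this]
      linarith
    have hne : ζ ≠ RS.simple i := by
      intro h
      apply hβnej
      have : β - RS.simple j = 0 := by
        have h2 := sub_eq_zero.mpr h
        rw [hζdef] at h2
        rw [← h2]; abel
      exact sub_eq_zero.mp this
    have hroot := RS.sub_mem_of_inner_pos hζ (RS.simple_mem i) hinner hne
    have : ζ - RS.simple i = β - RS.simple j := by rw [hζdef]; abel
    rw [this] at hroot
    exact hβjR hroot

/-- The main combinatorial lemma: if `β` is `j`-minimal and `β ≤ α` with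
`α - αⱼ` a root, then the coefficient of `αⱼ` in `α - β` is at least 1. -/
lemma key_G (j : Fin n) : ∀ N : ℕ, ∀ β α : EuclideanSpace ℝ (Fin n),
    β ∈ RS.R → β ∈ RS.Qplus → ⟪β, RS.simple j⟫ ≤ 0 → β - RS.simple j ∉ RS.R →
    α - β ∈ RS.Qplus → α - RS.simple j ∈ RS.R → RS.ht (α - β) ≤ N →
    1 ≤ RS.co (α - β) j := by
  intro N
  induction N with
  | zero =>
    intro β α hβR hβQ hβj hβjR hνQ hμR hht
    exfalso
    have hν0 : α - β = 0 := RS.eq_zero_of_ht hνQ (by exact_mod_cast hht)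
    have : α = β := by
      have := sub_eq_zero.mp hν0; exact this.symm ▸ rfl
    rw [← this] at hβjR
    exact hβjR hμR
  | succ N ih =>
    intro β α hβR hβQ hβj hβjR hνQ hμR hht
    set ν := α - β with hνdef
    by_cases hν0 : ν = 0
    · exfalso
      have : α = β := by have := sub_eq_zero.mp hν0; exact this.symm ▸ rfl
      rw [← this] at hβjR
      exact hβjR hμR
    rcases RS.co_zero_or_one_le hνQ j with hcj | hcj
    swap
    · exact hcj
    exfalso
    set μ := α - RS.simple j with hμdef
    have hββ : (0:ℝ) < ⟪β, β⟫ := RS.inner_self_pos_of_mem hβR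
    -- ⟪β, μ⟫ ≤ 0
    have hβμ : ⟪β, μ⟫ ≤ 0 := by
      by_contra h
      push_neg at h
      have hβneμ : β ≠ μ := by
        intro heq
        have : ν = RS.simple j := by rw [hνdef, heq, hμdef]; abel
        rw [this, co_simple, if_pos rfl] at hcj
        linarith
      have hroot := RS.sub_mem_of_inner_pos hβR (by rw [hμdef] at h ⊢; exact hμR) h hβneμ
      have hbm : β - μ = RS.simple j - ν := by rw [hμdef, hνdef]; abel
      rw [hbm] at hroot
      rcases RS.root_pm hroot with hq | hq
      · -- simple j - ν ∈ Qplus : forces ν = 0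
        apply hν0
        apply RS.eq_zero_of_co
        intro k
        by_cases hk : j = k
        · rw [← hk]; exact hcj
        · have h1 := RS.co_nonneg hq k
          rw [co_sub, co_simple, if_neg hk] at h1
          have h2 := RS.co_nonneg hνQ k
          linarith
      · -- ν - simple j ∈ Qplus : impossible since co ν j = 0
        have h1 := RS.co_nonneg hq j
        rw [co_neg, co_sub, co_simple, if_pos rfl, hcj] at h1
        linarith
    have hβν : ⟪β, ν⟫ < 0 := by
      have hexp : ν = μ + RS.simple j - β := by rw [hμdef, hνdef]; abel
      have : ⟪β, ν⟫ = ⟪β, μ⟫ + ⟪β, RS.simple j⟫ - ⟪β, β⟫ := by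
        rw [hexp, inner_sub_right, inner_add_right]
      linarith [this ▸ (by linarith : ⟪β, μ⟫ + ⟪β, RS.simple j⟫ - ⟪β, β⟫ < 0)]
    obtain ⟨i, hci, hβi⟩ := RS.exists_coord_inner_neg hνQ hβν
    have hij : i ≠ j := by
      intro h
      rw [h, hcj] at hci
      linarith
    -- τ = β + simple i
    have hτR : β + RS.simple i ∈ RS.R := by
      apply RS.add_mem_of_inner_neg hβR (RS.simple_mem i) hβi
      intro h
      exact RS.neg_simple_not_Qplus i (h ▸ hβQ)
    have hτQ : β + RS.simple i ∈ RS.Qplus := add_mem hβQ (RS.simple_mem_Qplus i)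
    have hτj : ⟪β + RS.simple i, RS.simple j⟫ ≤ 0 := by
      rw [inner_add_left]
      have := RS.simple_inner_nonpos hij
      linarith
    have hτjR : (β + RS.simple i) - RS.simple j ∉ RS.R := by
      have := RS.zeta_kill hβR hβQ hβj hβjR hij hβi
      intro h
      apply this
      have heq : β + RS.simple i - RS.simple j = (β + RS.simple i) - RS.simple j := by abel
      rw [heq]
      exact h
    have hν'Q : α - (β + RS.simple i) ∈ RS.Qplus := by
      have heq : α - (β + RS.simple i) = ν - RS.simple i := by rw [hνdef]; abel
      rw [heq]
      exact RS.sub_simple_mem_Qplus hνQ hci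
    have hht' : RS.ht (α - (β + RS.simple i)) ≤ N := by
      have heq : α - (β + RS.simple i) = ν - RS.simple i := by rw [hνdef]; abel
      rw [heq, ht_sub, ht_simple]
      push_cast at hht
      linarith
    have hres := ih (β + RS.simple i) α hτR hτQ hτj hτjR hν'Q hμR hht'
    have heq : α - (β + RS.simple i) = ν - RS.simple i := by rw [hνdef]; abel
    rw [heq, co_sub, co_simple, if_neg hij, hcj] at hres
    linarith

end BasedRootSys
namespace BasedRootSys

variable {n : ℕ} (RS : BasedRootSys n)

lemma simple_mem_Rpos (i : Fin n) : RS.simple i ∈ RS.Rpos :=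
  ⟨RS.simple_mem i, RS.simple_mem_Qplus i⟩

lemma simple_mem_RposJ {J : Set (Fin n)} {j : Fin n} (hj : j ∈ J) :
    RS.simple j ∈ RS.RposJ J :=
  ⟨⟨RS.simple_mem j, AddSubgroup.subset_closure ⟨j, hj, rfl⟩⟩, RS.simple_mem_Rpos j⟩

/-- Elements of a `J`-antichain are `j`-minimal for every `j ∈ J`. -/
lemma antichain_minimal {J : Set (Fin n)} {A : Set (EuclideanSpace ℝ (Fin n))}
    (hA : RS.IsJAntichain J A) {β : EuclideanSpace ℝ (Fin n)} (hβA : β ∈ A) {j : Fin n}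
    (hj : j ∈ J) : ⟪β, RS.simple j⟫ ≤ 0 ∧ β - RS.simple j ∉ RS.R := by
  obtain ⟨hsub, hdisj, _, hmin⟩ := hA
  have hβR : β ∈ RS.R := (hsub hβA).1
  have hnotroot : β - RS.simple j ∉ RS.R := hmin β hβA j hj
  refine ⟨?_, hnotroot⟩
  by_contra h
  push_neg at h
  have hne : β ≠ RS.simple j := by
    intro heq
    have : β ∈ A ∩ RS.RposJ J := ⟨hβA, heq ▸ RS.simple_mem_RposJ hj⟩
    rw [hdisj] at this
    exact this
  exact hnotroot (RS.sub_mem_of_inner_pos hβR (RS.simple_mem j) h hne)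

/-- Main consequence of `key_G`: antichain elements pass below subtraction of
a simple root in `J`. -/
lemma le_sub_simple {J : Set (Fin n)} {A : Set (EuclideanSpace ℝ (Fin n))}
    (hA : RS.IsJAntichain J A) {β α : EuclideanSpace ℝ (Fin n)} (hβA : β ∈ A)
    (hle : RS.le β α) {j : Fin n} (hj : j ∈ J) (hroot : α - RS.simple j ∈ RS.R) :
    RS.le β (α - RS.simple j) := by
  obtain ⟨hβj, hβjR⟩ := RS.antichain_minimal hA hβA hj
  have hβR : β ∈ RS.R := (hA.1 hβA).1
  have hβQ : β ∈ RS.Qplus := (hA.1 hβA).2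
  have hνQ : α - β ∈ RS.Qplus := hle
  obtain ⟨N, hN⟩ := exists_nat_ge (RS.ht (α - β))
  have hkey := RS.key_G j N β α hβR hβQ hβj hβjR hνQ hroot hN
  have : α - RS.simple j - β = (α - β) - RS.simple j := by abel
  unfold le
  rw [this]
  exact RS.sub_simple_mem_Qplus hνQ hkey

/-- If `x ∈ Q⁺` sits below something supported on `J`, then `x` is supported on `J`. -/
lemma supported_of_le {J : Set (Fin n)} {x y : EuclideanSpace ℝ (Fin n)}
    (hy : ∀ i ∉ J, RS.co y i = 0) (hx : x ∈ RS.Qplus) (hxy : y - x ∈ RS.Qplus) :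
    ∀ i ∉ J, RS.co x i = 0 := by
  intro i hi
  have h1 := RS.co_nonneg hx i
  have h2 := RS.co_nonneg hxy i
  rw [co_sub, hy i hi] at h2
  linarith

end BasedRootSys
namespace BasedRootSys

variable {n : ℕ} (RS : BasedRootSys n)

lemma mem_PhiOf_iff {A : Set (EuclideanSpace ℝ (Fin n))} {α : EuclideanSpace ℝ (Fin n)} :
    α ∈ RS.PhiOf A ↔ (α ∈ RS.R ∧ α ∈ RS.Qplus) ∧ ∃ β ∈ A, RS.le β α := Iff.rfl

lemma mem_Rpos_iff {α : EuclideanSpace ℝ (Fin n)} :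
    α ∈ RS.Rpos ↔ α ∈ RS.R ∧ α ∈ RS.Qplus := Iff.rfl

/-- `Φ(A)` avoids `R⁺(J)`. -/
lemma PhiOf_disj {J : Set (Fin n)} {A : Set (EuclideanSpace ℝ (Fin n))}
    (hA : RS.IsJAntichain J A) : RS.PhiOf A ∩ RS.RposJ J = ∅ := by
  ext α
  simp only [Set.mem_inter_iff, Set.mem_empty_iff_false, iff_false]
  rintro ⟨hPhi, hRposJ⟩
  obtain ⟨⟨hαR, hαQ⟩, β, hβA, hle⟩ := RS.mem_PhiOf_iff.mp hPhi
  obtain ⟨⟨_, hαcl⟩, _⟩ := hRposJ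
  have hαco : ∀ i ∉ J, RS.co α i = 0 := RS.co_eq_zero_of_memJ hαcl
  have hβco : ∀ i ∉ J, RS.co β i = 0 := RS.supported_of_le hαco (hA.1 hβA).2 hle
  have hβcl : β ∈ AddSubgroup.closure (RS.simple '' J) := RS.memJ_of_co (hA.1 hβA).2 hβco
  have : β ∈ A ∩ RS.RposJ J := ⟨hβA, ⟨(hA.1 hβA).1, hβcl⟩, hA.1 hβA⟩
  rw [hA.2.1] at this
  exact this

/-- Induction for subtracting a `J`-supported element of `Q⁺` from a member of `Φ(A)`. -/
lemma descend {J : Set (Fin n)} {A : Set (EuclideanSpace ℝ (Fin n))}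
    (hA : RS.IsJAntichain J A) : ∀ N : ℕ, ∀ γ α : EuclideanSpace ℝ (Fin n),
    γ ∈ RS.Qplus → (∀ i ∉ J, RS.co γ i = 0) → α ∈ RS.PhiOf A → α - γ ∈ RS.R →
    α - γ ∈ RS.Qplus → RS.ht γ ≤ N → α - γ ∈ RS.PhiOf A := by
  intro N
  induction N with
  | zero =>
    intro γ α hγQ _ hαPhi _ _ hht
    have : γ = 0 := RS.eq_zero_of_ht hγQ (by exact_mod_cast hht)
    rw [this, sub_zero]
    exact hαPhi
  | succ N ih =>
    intro γ α hγQ hγco hαPhi hμR hμQ hht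
    by_cases hγ0 : γ = 0
    · rw [hγ0, sub_zero]; exact hαPhi
    obtain ⟨⟨hαR, hαQ⟩, β, hβA, hleβ⟩ := RS.mem_PhiOf_iff.mp hαPhi
    have hγself : (0:ℝ) < ⟪γ, γ⟫ := inner_self_pos_of_ne_zero hγ0
    obtain ⟨i, hci, hpos⟩ := RS.exists_coord_inner_pos hγQ hγself
    have hiJ : i ∈ J := by
      by_contra h
      rw [hγco i h] at hci
      linarith
    have hsplit : ⟪γ, RS.simple i⟫ = ⟪α, RS.simple i⟫ - ⟪α - γ, RS.simple i⟫ := by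
      rw [inner_sub_left]
      ring
    have hγ'Q : γ - RS.simple i ∈ RS.Qplus := RS.sub_simple_mem_Qplus hγQ hci
    have hγ'co : ∀ k ∉ J, RS.co (γ - RS.simple i) k = 0 := by
      intro k hk
      have hki : i ≠ k := fun h => hk (h ▸ hiJ)
      rw [co_sub, co_simple, if_neg hki, hγco k hk]
      ring
    have hht' : RS.ht (γ - RS.simple i) ≤ N := by
      rw [ht_sub, ht_simple]
      push_cast at hht
      linarith
    rcases lt_or_ge (⟪α - γ, RS.simple i⟫) 0 with hμi | hμi
    · -- grow the bottom : μ + simple i  ∈ Φ(A) by IH, then come back down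
      have hμne : α - γ ≠ -RS.simple i := by
        intro h
        exact RS.neg_simple_not_Qplus i (h ▸ hμQ)
      have hμ'R : (α - γ) + RS.simple i ∈ RS.R :=
        RS.add_mem_of_inner_neg hμR (RS.simple_mem i) hμi hμne
      have heq1 : α - (γ - RS.simple i) = (α - γ) + RS.simple i := by abel
      have hres := ih (γ - RS.simple i) α hγ'Q hγ'co hαPhi
        (by rw [heq1]; exact hμ'R)
        (by rw [heq1]; exact add_mem hμQ (RS.simple_mem_Qplus i)) hht'
      obtain ⟨⟨hμ''R, hμ''Q⟩, β', hβ'A, hleβ'⟩ := RS.mem_PhiOf_iff.mp hres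
      have heq2 : α - (γ - RS.simple i) - RS.simple i = α - γ := by abel
      have hdown : α - (γ - RS.simple i) - RS.simple i ∈ RS.R := by rw [heq2]; exact hμR
      have hle2 := RS.le_sub_simple hA hβ'A hleβ' hiJ hdown
      rw [heq2] at hle2
      exact RS.mem_PhiOf_iff.mpr ⟨⟨hμR, hμQ⟩, β', hβ'A, hle2⟩
    · -- peel the top : α - simple i ∈ Φ(A), recurse
      have hαi : (0:ℝ) < ⟪α, RS.simple i⟫ := by
        rw [hsplit] at hpos
        linarith
      have hαne : α ≠ RS.simple i := by
        intro h
        -- then α - γ would be 0, contradicting that it is a root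
        apply RS.root_ne_zero hμR
        apply RS.eq_zero_of_co
        intro k
        have h1 := RS.co_nonneg hμQ k
        have h2 := RS.co_nonneg hγQ k
        have h3 : RS.co (α - γ) k = (if i = k then (1:ℝ) else 0) - RS.co γ k := by
          rw [co_sub, h, co_simple]
        by_cases hk : i = k
        · rw [h3, if_pos hk]
          rw [h3, if_pos hk] at h1
          have : RS.co γ k = RS.co γ i := by rw [hk]
          rw [this] at h1 ⊢
          linarith
        · rw [h3, if_neg hk]
          rw [h3, if_neg hk] at h1
          linarith
      have hα'R : α - RS.simple i ∈ RS.R :=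
        RS.sub_mem_of_inner_pos hαR (RS.simple_mem i) hαi hαne
      have hα'Q : α - RS.simple i ∈ RS.Qplus := by
        have heq : α - RS.simple i = (α - γ) + (γ - RS.simple i) := by abel
        rw [heq]
        exact add_mem hμQ hγ'Q
      have hleβ' := RS.le_sub_simple hA hβA hleβ hiJ hα'R
      have hα'Phi : α - RS.simple i ∈ RS.PhiOf A :=
        RS.mem_PhiOf_iff.mpr ⟨⟨hα'R, hα'Q⟩, β, hβA, hleβ'⟩
      have heq3 : (α - RS.simple i) - (γ - RS.simple i) = α - γ := by abel
      have hres := ih (γ - RS.simple i) (α - RS.simple i) hγ'Q hγ'co hα'Phi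
        (by rw [heq3]; exact hμR) (by rw [heq3]; exact hμQ) hht'
      rw [heq3] at hres
      exact hres

/-- `Φ(A)` is a `J`-ideal. -/
lemma PhiOf_isJIdeal {J : Set (Fin n)} {A : Set (EuclideanSpace ℝ (Fin n))}
    (hA : RS.IsJAntichain J A) : RS.IsJIdeal J (RS.PhiOf A) := by
  refine ⟨fun x hx => hx.1, RS.PhiOf_disj hA, ?_⟩
  intro α hα x hx hsum
  obtain ⟨⟨hαR, hαQ⟩, β, hβA, hleβ⟩ := RS.mem_PhiOf_iff.mp hα
  have hxpos : x ∈ RS.Rpos → α + x ∈ RS.PhiOf A := by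
    rintro ⟨hxR, hxQ⟩
    exact RS.mem_PhiOf_iff.mpr ⟨⟨hsum, add_mem hαQ hxQ⟩, β, hβA, RS.le_add_of_le hleβ hxQ⟩
  rcases hx with hx | hx
  · exact hxpos hx
  obtain ⟨hxR, hxcl⟩ := hx
  rcases RS.root_pm hxR with hxQ | hxQ
  · exact hxpos ⟨hxR, hxQ⟩
  -- x is a negative J-root; write γ = -x
  set γ := -x with hγdef
  have hγQ : γ ∈ RS.Qplus := hxQ
  have hγco : ∀ i ∉ J, RS.co γ i = 0 := by
    intro i hi
    rw [hγdef, co_neg, RS.co_eq_zero_of_memJ hxcl i hi]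
    ring
  have heq : α - γ = α + x := by rw [hγdef]; abel
  have hμR : α - γ ∈ RS.R := by rw [heq]; exact hsum
  have hμQ : α - γ ∈ RS.Qplus := by
    rcases RS.root_pm hμR with h | h
    · exact h
    exfalso
    -- α would be supported on J, contradicting the antichain condition
    have hneg : γ - α ∈ RS.Qplus := by
      have : γ - α = -(α - γ) := by abel
      rw [this]
      exact h
    have hαco : ∀ i ∉ J, RS.co α i = 0 := RS.supported_of_le hγco hαQ hneg
    have hβco : ∀ i ∉ J, RS.co β i = 0 := RS.supported_of_le hαco (hA.1 hβA).2 hleβ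
    have hβcl : β ∈ AddSubgroup.closure (RS.simple '' J) := RS.memJ_of_co (hA.1 hβA).2 hβco
    have : β ∈ A ∩ RS.RposJ J := ⟨hβA, ⟨(hA.1 hβA).1, hβcl⟩, hA.1 hβA⟩
    rw [hA.2.1] at this
    exact this
  obtain ⟨N, hN⟩ := exists_nat_ge (RS.ht γ)
  have := RS.descend hA N γ α hγQ hγco (RS.mem_PhiOf_iff.mpr ⟨⟨hαR, hαQ⟩, β, hβA, hleβ⟩)
    hμR hμQ hN
  rw [heq] at this
  exact this

end BasedRootSys
namespace BasedRootSys

variable {n : ℕ} (RS : BasedRootSys n)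

/-- A `J`-ideal is upward closed in the dominance order (within `R⁺`). -/
lemma ideal_upclosed {J : Set (Fin n)} {Φ : Set (EuclideanSpace ℝ (Fin n))}
    (hΦ : RS.IsJIdeal J Φ) : ∀ N : ℕ, ∀ μ β : EuclideanSpace ℝ (Fin n),
    μ ∈ Φ → β ∈ RS.R → β ∈ RS.Qplus → β - μ ∈ RS.Qplus → RS.ht (β - μ) ≤ N → β ∈ Φ := by
  intro N
  induction N with
  | zero =>
    intro μ β hμΦ _ _ hνQ hht
    have : β - μ = 0 := RS.eq_zero_of_ht hνQ (by exact_mod_cast hht)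
    have : β = μ := by rw [sub_eq_zero] at this; exact this
    rw [this]; exact hμΦ
  | succ N ih =>
    intro μ β hμΦ hβR hβQ hνQ hht
    by_cases hν0 : β - μ = 0
    · have : β = μ := by rw [sub_eq_zero] at hν0; exact hν0
      rw [this]; exact hμΦ
    obtain ⟨hμR, hμQ⟩ := hΦ.1 hμΦ
    have hνself : (0:ℝ) < ⟪β - μ, β - μ⟫ := inner_self_pos_of_ne_zero hν0
    obtain ⟨i, hci, hpos⟩ := RS.exists_coord_inner_pos hνQ hνself
    have hν'Q : (β - μ) - RS.simple i ∈ RS.Qplus := RS.sub_simple_mem_Qplus hνQ hci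
    have hht' : RS.ht ((β - μ) - RS.simple i) ≤ N := by
      rw [ht_sub, ht_simple]
      push_cast at hht
      linarith
    have hsplit : ⟪β - μ, RS.simple i⟫ = ⟪β, RS.simple i⟫ - ⟪μ, RS.simple i⟫ := by
      rw [inner_sub_left]
    rcases lt_or_ge (⟪μ, RS.simple i⟫) 0 with hμi | hμi
    · -- grow μ
      have hμne : μ ≠ -RS.simple i := by
        intro h; exact RS.neg_simple_not_Qplus i (h ▸ hμQ)
      have hμ'R : μ + RS.simple i ∈ RS.R :=
        RS.add_mem_of_inner_neg hμR (RS.simple_mem i) hμi hμne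
      have hμ'Φ : μ + RS.simple i ∈ Φ :=
        hΦ.2.2 μ hμΦ (RS.simple i) (Or.inl (RS.simple_mem_Rpos i)) hμ'R
      have heq : β - (μ + RS.simple i) = (β - μ) - RS.simple i := by abel
      exact ih (μ + RS.simple i) β hμ'Φ hβR hβQ (by rw [heq]; exact hν'Q)
        (by rw [heq]; exact hht')
    · -- peel β
      have hβi : (0:ℝ) < ⟪β, RS.simple i⟫ := by
        have hpos' := hpos
        rw [hsplit] at hpos'
        linarith
      have hβne : β ≠ RS.simple i := by
        intro h
        apply RS.root_ne_zero hμR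
        apply RS.eq_zero_of_co
        intro k
        have h1 := RS.co_nonneg hμQ k
        have h2 := RS.co_nonneg hνQ k
        have h3 : RS.co (β - μ) k = (if i = k then (1:ℝ) else 0) - RS.co μ k := by
          rw [co_sub, h, co_simple]
        by_cases hk : i = k
        · rw [h3, if_pos hk] at h2
          have hc : RS.co (β - μ) k = RS.co (β - μ) i := by rw [hk]
          have hci' := hci
          rw [← hc, h3, if_pos hk] at hci'
          linarith
        · rw [h3, if_neg hk] at h2
          linarith
      have hβ'R : β - RS.simple i ∈ RS.R :=
        RS.sub_mem_of_inner_pos hβR (RS.simple_mem i) hβi hβne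
      have hβ'Q : β - RS.simple i ∈ RS.Qplus := by
        have heq : β - RS.simple i = μ + ((β - μ) - RS.simple i) := by abel
        rw [heq]
        exact add_mem hμQ hν'Q
      have heq : (β - RS.simple i) - μ = (β - μ) - RS.simple i := by abel
      have hβ'Φ : β - RS.simple i ∈ Φ := ih μ (β - RS.simple i) hμΦ hβ'R hβ'Q
        (by rw [heq]; exact hν'Q) (by rw [heq]; exact hht')
      have hsum : (β - RS.simple i) + RS.simple i ∈ RS.R := by
        have : (β - RS.simple i) + RS.simple i = β := by abel
        rw [this]; exact hβR
      have := hΦ.2.2 (β - RS.simple i) hβ'Φ (RS.simple i)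
        (Or.inl (RS.simple_mem_Rpos i)) hsum
      have heq2 : (β - RS.simple i) + RS.simple i = β := by abel
      rw [heq2] at this
      exact this

/-- Every element of a finite subset of `R⁺` dominates a minimal element. -/
lemma exists_minimal_le {Φ : Set (EuclideanSpace ℝ (Fin n))} (hsub : Φ ⊆ RS.Rpos)
    {α : EuclideanSpace ℝ (Fin n)} (hα : α ∈ Φ) : ∃ β ∈ RS.minimals Φ, RS.le β α := by
  classical
  have hfin : ({γ ∈ Φ | RS.le γ α} : Set _).Finite :=
    Set.Finite.subset RS.finite (fun x hx => (hsub hx.1).1)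
  obtain ⟨γ₀, hγ₀, hmin⟩ := Finset.exists_min_image hfin.toFinset RS.ht
    ⟨α, by rw [Set.Finite.mem_toFinset]; exact ⟨hα, RS.le_refl' α⟩⟩
  rw [Set.Finite.mem_toFinset] at hγ₀
  refine ⟨γ₀, ⟨hγ₀.1, ?_⟩, hγ₀.2⟩
  intro γ' hγ' hle'
  have hγ'S : γ' ∈ {γ ∈ Φ | RS.le γ α} := ⟨hγ', RS.le_trans' hle' hγ₀.2⟩
  have hht := hmin γ' (by rw [Set.Finite.mem_toFinset]; exact hγ'S)
  have h0 : γ₀ - γ' = 0 := by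
    apply RS.eq_zero_of_ht hle'
    rw [ht_sub]
    linarith
  rw [sub_eq_zero] at h0
  exact h0.symm

/-- The minimal elements of a `J`-ideal form a `J`-antichain. -/
lemma minimals_isJAntichain {J : Set (Fin n)} {Φ : Set (EuclideanSpace ℝ (Fin n))}
    (hΦ : RS.IsJIdeal J Φ) : RS.IsJAntichain J (RS.minimals Φ) := by
  refine ⟨fun x hx => hΦ.1 hx.1, ?_, ?_, ?_⟩
  · apply Set.eq_empty_iff_forall_notMem.mpr
    intro x hx
    have : x ∈ Φ ∩ RS.RposJ J := ⟨hx.1.1, hx.2⟩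
    rw [hΦ.2.1] at this
    exact this
  · intro α hα β hβ hne hle
    exact hne (hβ.2 α hα.1 hle)
  · intro β hβ j hj hroot
    have hnegj : -RS.simple j ∈ RS.RJ J := by
      refine ⟨RS.neg_mem _ (RS.simple_mem j), ?_⟩
      exact AddSubgroup.neg_mem _ (AddSubgroup.subset_closure ⟨j, hj, rfl⟩)
    have hsum : β + -RS.simple j ∈ RS.R := by
      have : β + -RS.simple j = β - RS.simple j := by abel
      rw [this]; exact hroot
    have hmem := hΦ.2.2 β hβ.1 (-RS.simple j) (Or.inr hnegj) hsum
    have heq : β + -RS.simple j = β - RS.simple j := by abel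
    rw [heq] at hmem
    have hle : RS.le (β - RS.simple j) β := by
      unfold le
      have : β - (β - RS.simple j) = RS.simple j := by abel
      rw [this]
      exact RS.simple_mem_Qplus j
    have := hβ.2 (β - RS.simple j) hmem hle
    have hj0 : RS.simple j = (0 : EuclideanSpace ℝ (Fin n)) := by
      have := sub_eq_self.mp this
      exact this
    exact RS.root_ne_zero (RS.simple_mem j) hj0

lemma PhiOf_minimals {J : Set (Fin n)} {Φ : Set (EuclideanSpace ℝ (Fin n))}
    (hΦ : RS.IsJIdeal J Φ) : RS.PhiOf (RS.minimals Φ) = Φ := by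
  ext x
  constructor
  · intro hx
    obtain ⟨⟨hxR, hxQ⟩, β, hβmin, hle⟩ := RS.mem_PhiOf_iff.mp hx
    obtain ⟨N, hN⟩ := exists_nat_ge (RS.ht (x - β))
    exact RS.ideal_upclosed hΦ N β x hβmin.1 hxR hxQ hle hN
  · intro hx
    obtain ⟨β, hβmin, hle⟩ := RS.exists_minimal_le hΦ.1 hx
    exact RS.mem_PhiOf_iff.mpr ⟨hΦ.1 hx, β, hβmin, hle⟩

lemma minimals_PhiOf {J : Set (Fin n)} {A : Set (EuclideanSpace ℝ (Fin n))}
    (hA : RS.IsJAntichain J A) : RS.minimals (RS.PhiOf A) = A := by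
  have hAsub : A ⊆ RS.PhiOf A := by
    intro β hβ
    exact RS.mem_PhiOf_iff.mpr ⟨hA.1 hβ, β, hβ, RS.le_refl' β⟩
  ext γ
  constructor
  · intro hγ
    obtain ⟨hγPhi, hmin⟩ := hγ
    obtain ⟨_, β, hβA, hle⟩ := RS.mem_PhiOf_iff.mp hγPhi
    have : β = γ := hmin β (hAsub hβA) hle
    rw [← this]
    exact hβA
  · intro hγA
    refine ⟨hAsub hγA, ?_⟩
    intro γ' hγ' hle
    obtain ⟨_, β', hβ'A, hle'⟩ := RS.mem_PhiOf_iff.mp hγ'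
    have hleβ'γ : RS.le β' γ := RS.le_trans' hle' hle
    have hββ : β' = γ := by
      by_contra hne
      exact hA.2.2.1 β' hβ'A γ hγA hne hleβ'γ
    rw [hββ] at hle'
    exact RS.le_antisymm' hle hle'

end BasedRootSys

/-- `A ↦ Φ(A)` is a bijection from `J`-antichains to `J`-ideals, with inverse
sending an ideal to its set of minimal elements. -/
theorem stmt_5 {n : ℕ} (RS : BasedRootSys n) (J : Set (Fin n)) :
    Set.BijOn (fun A => RS.PhiOf A) {A | RS.IsJAntichain J A} {Φ | RS.IsJIdeal J Φ} ∧
    (∀ A, RS.IsJAntichain J A → RS.minimals (RS.PhiOf A) = A) ∧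
    (∀ Φ, RS.IsJIdeal J Φ → RS.PhiOf (RS.minimals Φ) = Φ) := by
  refine ⟨⟨?_, ?_, ?_⟩, ?_, ?_⟩
  · intro A hA
    exact RS.PhiOf_isJIdeal hA
  · intro A₁ h₁ A₂ h₂ heq
    have e₁ := RS.minimals_PhiOf h₁
    have e₂ := RS.minimals_PhiOf h₂
    simp only at heq
    rw [← e₁, ← e₂, heq]
  · intro Φ hΦ
    exact ⟨RS.minimals Φ, RS.minimals_isJAntichain hΦ, RS.PhiOf_minimals hΦ⟩
  · intro A hA
    exact RS.minimals_PhiOf hA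
  · intro Φ hΦ
    exact RS.PhiOf_minimals hΦ
end

section
/- Let A be an antichain in R⁺. The ideal Φ(A) is abelian (no sum of two elements of Φ(A) is a root) if and only if: (1) for all distinct α, β ∈ A there exists i ∈ I with d_i(α) + d_i(β) > d_i(θ), and (2) for every α ∈ A there exists i ∈ I with 2 d_i(α) > d_i(θ). -/
open RealInnerProductSpace

section Helpers

variable {n : ℕ} {RS : BasedRootSys n}

local notation "E" => EuclideanSpace ℝ (Fin n)

lemma coeff_unique {c c' : Fin n → ℝ}
    (h : ∑ i, c i • RS.simple i = ∑ i, c' i • RS.simple i) : c = c' := by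
  funext j
  have h0 : ∑ i, (c i - c' i) • RS.simple i = 0 := by
    simp [sub_smul, Finset.sum_sub_distrib, h]
  have := (Fintype.linearIndependent_iff.mp RS.simple_indep) (fun i => c i - c' i) h0 j
  simpa [sub_eq_zero] using this

lemma mem_Qplus_iff {v : E} :
    v ∈ RS.Qplus ↔ ∃ c : Fin n → ℕ, v = ∑ i, (c i : ℝ) • RS.simple i := by
  constructor
  · intro hv
    induction hv using AddSubmonoid.closure_induction with
    | mem x hx =>
      obtain ⟨j, rfl⟩ := hx
      exact ⟨fun i => if i = j then 1 else 0, by simp⟩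
    | zero => exact ⟨0, by simp⟩
    | add x y hx hy ihx ihy =>
      obtain ⟨c1, rfl⟩ := ihx
      obtain ⟨c2, rfl⟩ := ihy
      exact ⟨c1 + c2, by simp [add_smul, Finset.sum_add_distrib]⟩
  · rintro ⟨c, rfl⟩
    refine AddSubmonoid.sum_mem _ (fun i _ => ?_)
    rw [Nat.cast_smul_eq_nsmul]
    exact AddSubmonoid.nsmul_mem _ (AddSubmonoid.subset_closure (Set.mem_range_self i)) _

lemma inner_self_pos_of_mem {α : E} (hα : α ∈ RS.R) : (0:ℝ) < ⟪α, α⟫ := by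
  have hne : α ≠ 0 := fun h => RS.zero_not_mem (h ▸ hα)
  rcases (real_inner_self_nonneg (x := α)).lt_or_eq with h | h
  · exact h
  · exact absurd (inner_self_eq_zero.mp h.symm) hne

/-- If two roots have negative inner product and are not opposite, their sum is a root. -/
lemma root_add {α β : E} (hα : α ∈ RS.R) (hβ : β ∈ RS.R)
    (hneg : ⟪α, β⟫ < 0) (hne : α + β ≠ 0) : α + β ∈ RS.R := by
  obtain ⟨k₁, hk₁⟩ := RS.crystal α hα β hβ
  obtain ⟨k₂, hk₂⟩ := RS.crystal β hβ α hα
  have ha : (0:ℝ) < ⟪α, α⟫ := inner_self_pos_of_mem hα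
  have hb : (0:ℝ) < ⟪β, β⟫ := inner_self_pos_of_mem hβ
  have hsymm : ⟪β, α⟫ = ⟪α, β⟫ := real_inner_comm α β
  rw [hsymm] at hk₂
  have hα0 : α ≠ 0 := fun h => RS.zero_not_mem (h ▸ hα)
  have hβ0 : β ≠ 0 := fun h => RS.zero_not_mem (h ▸ hβ)
  have hna : (0:ℝ) < ‖α‖ := norm_pos_iff.mpr hα0
  have hnb : (0:ℝ) < ‖β‖ := norm_pos_iff.mpr hβ0
  -- strict Cauchy-Schwarz
  have hcs : ⟪α, β⟫ * ⟪α, β⟫ < ⟪α, α⟫ * ⟪β, β⟫ := by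
    have hip : ⟪-α, β⟫ < ‖-α‖ * ‖β‖ := by
      rw [inner_lt_norm_mul_iff_real]
      intro heq
      -- heq : ‖β‖ • (-α) = ‖-α‖ • β
      rw [norm_neg, smul_neg] at heq
      have hαβ : α = (‖β‖⁻¹ * -‖α‖) • β := by
        have h1 : ‖β‖ • α = (-‖α‖) • β := by
          rw [neg_smul, ← heq, neg_neg]
        rw [mul_smul, ← h1, ← mul_smul, inv_mul_cancel₀ (ne_of_gt hnb), one_smul]
      have hmem : (‖β‖⁻¹ * -‖α‖) • β ∈ RS.R := hαβ ▸ hα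
      rcases RS.reduced β hβ _ hmem with h1 | h1
      · nlinarith [mul_pos (inv_pos.mpr hnb) hna]
      · rw [h1, neg_one_smul] at hαβ
        exact hne (by rw [hαβ]; abel)
    rw [inner_neg_left, norm_neg] at hip
    have h2 : ⟪α, α⟫ = ‖α‖ ^ 2 := real_inner_self_eq_norm_sq α
    have h3 : ⟪β, β⟫ = ‖β‖ ^ 2 := real_inner_self_eq_norm_sq β
    nlinarith [hip, hneg, hna, hnb]
  have hk₁neg : k₁ ≤ -1 := by
    have h1 : (k₁ : ℝ) < 0 := by
      rw [← hk₁]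
      exact div_neg_of_neg_of_pos (by linarith) ha
    have : k₁ < 0 := by exact_mod_cast h1
    omega
  have hk₂neg : k₂ ≤ -1 := by
    have h1 : (k₂ : ℝ) < 0 := by
      rw [← hk₂]
      exact div_neg_of_neg_of_pos (by linarith) hb
    have : k₂ < 0 := by exact_mod_cast h1
    omega
  have hprod : (k₁ : ℝ) * k₂ < 4 := by
    rw [← hk₁, ← hk₂, div_mul_div_comm]
    rw [div_lt_iff₀ (by positivity)]
    nlinarith [hcs]
  have hone : k₁ = -1 ∨ k₂ = -1 := by
    by_contra h
    push_neg at h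
    have h1 : k₁ ≤ -2 := by omega
    have h2 : k₂ ≤ -2 := by omega
    have h4 : (4:ℤ) ≤ k₁ * k₂ := by nlinarith
    have : (4:ℝ) ≤ (k₁:ℝ) * k₂ := by exact_mod_cast h4
    linarith
  rcases hone with h | h
  · have := RS.reflect_mem α hα β hβ
    rw [hk₁, h] at this
    simpa [add_comm] using this
  · have := RS.reflect_mem β hβ α hα
    rw [hsymm, hk₂, h] at this
    simpa [add_comm] using this

end Helpers


section Key

variable {n : ℕ} {RS : BasedRootSys n}

local notation "E" => EuclideanSpace ℝ (Fin n)

lemma inner_self_pos_of_ne {v : E} (h : v ≠ 0) : (0:ℝ) < ⟪v, v⟫ := by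
  rcases (real_inner_self_nonneg (x := v)).lt_or_eq with h' | h'
  · exact h'
  · exact absurd (inner_self_eq_zero.mp h'.symm) h

lemma simple_mem_Qplus (i : Fin n) : RS.simple i ∈ RS.Qplus :=
  AddSubmonoid.subset_closure (Set.mem_range_self i)

lemma sum_ite_one_smul (i : Fin n) :
    ∑ j, (if j = i then (1:ℝ) else 0) • RS.simple j = RS.simple i := by
  simp

lemma key : ∀ m : ℕ, ∀ μ ν lam : E, μ ∈ RS.Rpos → ν ∈ RS.Rpos → lam ∈ RS.R →
    ∀ c : Fin n → ℕ, (∑ i, c i) = m →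
    lam - μ - ν = ∑ i, (c i : ℝ) • RS.simple i →
    ∃ μ' ν' : E, μ' ∈ RS.Rpos ∧ ν' ∈ RS.Rpos ∧ RS.le μ μ' ∧ RS.le ν ν' ∧
      μ' + ν' ∈ RS.R := by
  intro m
  induction m with
  | zero =>
    intro μ ν lam hμ hν hlam c hsum hrep
    have hc0 : ∀ i, c i = 0 := by
      intro i
      have := Finset.sum_eq_zero_iff.mp hsum i (Finset.mem_univ i)
      exact this
    have hlameq : lam = μ + ν := by
      have : lam - μ - ν = 0 := by
        rw [hrep]
        exact Finset.sum_eq_zero (fun i _ => by rw [hc0 i]; simp)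
      have h3 : lam - (μ + ν) = 0 := by rw [← this]; abel
      exact sub_eq_zero.mp h3
    exact ⟨μ, ν, hμ, hν, (by simp [BasedRootSys.le]),
      (by simp [BasedRootSys.le]), hlameq ▸ hlam⟩
  | succ m ih =>
    intro μ ν lam hμ hν hlam c hsum hrep
    obtain ⟨cμ, hcμ⟩ := mem_Qplus_iff.mp hμ.2
    obtain ⟨cν, hcν⟩ := mem_Qplus_iff.mp hν.2
    set v := lam - μ - ν with hv
    -- v ≠ 0
    have hvne : v ≠ 0 := by
      intro h0
      have : (fun i => (c i : ℝ)) = (fun _ => (0:ℝ)) := by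
        apply coeff_unique (RS := RS)
        rw [← hrep, h0]
        simp
      have hz : ∀ i, c i = 0 := fun i => by
        have := congrFun this i
        exact_mod_cast this
      rw [Finset.sum_eq_zero (fun i _ => hz i)] at hsum
      omega
    -- find good index
    have hvv : (0:ℝ) < ⟪v, v⟫ := inner_self_pos_of_ne hvne
    have hexp : ⟪v, v⟫ = ∑ i, (c i : ℝ) * ⟪v, RS.simple i⟫ := by
      conv_lhs => rw [show ⟪v, v⟫ = ⟪v, ∑ i, (c i : ℝ) • RS.simple i⟫ by rw [← hrep]]
      rw [inner_sum]
      exact Finset.sum_congr rfl (fun i _ => real_inner_smul_right _ _ _)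
    have hidx : ∃ i, 1 ≤ c i ∧ 0 < ⟪v, RS.simple i⟫ := by
      by_contra h
      push_neg at h
      have : ∑ i, (c i : ℝ) * ⟪v, RS.simple i⟫ ≤ 0 := by
        apply Finset.sum_nonpos
        intro i _
        rcases Nat.eq_zero_or_pos (c i) with h0 | h0
        · simp [h0]
        · have := h i h0
          have hci : (0:ℝ) ≤ (c i : ℝ) := Nat.cast_nonneg _
          exact mul_nonpos_of_nonneg_of_nonpos hci this
      linarith [hexp ▸ hvv]
    obtain ⟨i, hci, hvi⟩ := hidx
    -- the decremented coefficient function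
    set c' : Fin n → ℕ := fun j => c j - (if j = i then 1 else 0) with hc'
    have hcast : ∀ j, ((c' j : ℕ) : ℝ) = (c j : ℝ) - (if j = i then (1:ℝ) else 0) := by
      intro j
      by_cases hj : j = i
      · subst hj
        simp [hc', Nat.cast_sub hci]
      · simp [hc', hj]
    have hsum' : ∑ j, c' j = m := by
      have : ((∑ j, c' j : ℕ) : ℝ) = (m : ℝ) := by
        push_cast
        rw [Finset.sum_congr rfl (fun j _ => hcast j), Finset.sum_sub_distrib]
        simp only [Finset.sum_ite_eq', Finset.mem_univ, if_pos]
        have : ((∑ j, c j : ℕ) : ℝ) = ((m:ℝ) + 1) := by rw [hsum]; push_cast; ring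
        push_cast at this
        linarith
      exact_mod_cast this
    have hsub : v - RS.simple i = ∑ j, ((c' j : ℕ) : ℝ) • RS.simple j := by
      rw [hrep]
      have h2 : ∀ j : Fin n, ((c' j : ℕ) : ℝ) • RS.simple j
          = (c j : ℝ) • RS.simple j - (if j = i then (1:ℝ) else 0) • RS.simple j := by
        intro j; rw [hcast j, sub_smul]
      rw [Finset.sum_congr rfl (fun j _ => h2 j), Finset.sum_sub_distrib, sum_ite_one_smul]
    rcases lt_or_ge ⟪μ, RS.simple i⟫ 0 with hμi | hμi
    · -- augment μ
      have hne0 : μ + RS.simple i ≠ 0 := by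
        intro h0
        have : (fun j => (cμ j : ℝ) + (if j = i then 1 else 0)) = (fun _ => (0:ℝ)) := by
          apply coeff_unique (RS := RS)
          have h2 : ∀ j : Fin n, ((cμ j : ℝ) + (if j = i then (1:ℝ) else 0)) • RS.simple j
              = (cμ j : ℝ) • RS.simple j + (if j = i then (1:ℝ) else 0) • RS.simple j := by
            intro j; rw [add_smul]
          rw [Finset.sum_congr rfl (fun j _ => h2 j),
            Finset.sum_add_distrib, sum_ite_one_smul, ← hcμ, h0]
          simp
        have := congrFun this i
        simp at this
        have hnn : (0:ℝ) ≤ (cμ i : ℝ) := Nat.cast_nonneg _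
        linarith
      have hroot : μ + RS.simple i ∈ RS.R :=
        root_add hμ.1 (RS.simple_mem i) hμi hne0
      have hQ : μ + RS.simple i ∈ RS.Qplus :=
        RS.Qplus.add_mem hμ.2 (simple_mem_Qplus i)
      have hrep' : lam - (μ + RS.simple i) - ν = ∑ j, ((c' j : ℕ) : ℝ) • RS.simple j := by
        rw [← hsub, hv]; abel
      obtain ⟨μ', ν', h1, h2, h3, h4, h5⟩ :=
        ih (μ + RS.simple i) ν lam ⟨hroot, hQ⟩ hν hlam c' hsum' hrep'
      refine ⟨μ', ν', h1, h2, ?_, h4, h5⟩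
      have : μ' - μ = (μ' - (μ + RS.simple i)) + RS.simple i := by abel
      show μ' - μ ∈ RS.Qplus
      rw [this]
      exact RS.Qplus.add_mem h3 (simple_mem_Qplus i)
    rcases lt_or_ge ⟪ν, RS.simple i⟫ 0 with hνi | hνi
    · -- augment ν
      have hne0 : ν + RS.simple i ≠ 0 := by
        intro h0
        have : (fun j => (cν j : ℝ) + (if j = i then 1 else 0)) = (fun _ => (0:ℝ)) := by
          apply coeff_unique (RS := RS)
          have h2 : ∀ j : Fin n, ((cν j : ℝ) + (if j = i then (1:ℝ) else 0)) • RS.simple j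
              = (cν j : ℝ) • RS.simple j + (if j = i then (1:ℝ) else 0) • RS.simple j := by
            intro j; rw [add_smul]
          rw [Finset.sum_congr rfl (fun j _ => h2 j),
            Finset.sum_add_distrib, sum_ite_one_smul, ← hcν, h0]
          simp
        have := congrFun this i
        simp at this
        have hnn : (0:ℝ) ≤ (cν i : ℝ) := Nat.cast_nonneg _
        linarith
      have hroot : ν + RS.simple i ∈ RS.R :=
        root_add hν.1 (RS.simple_mem i) hνi hne0
      have hQ : ν + RS.simple i ∈ RS.Qplus :=
        RS.Qplus.add_mem hν.2 (simple_mem_Qplus i)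
      have hrep' : lam - μ - (ν + RS.simple i) = ∑ j, ((c' j : ℕ) : ℝ) • RS.simple j := by
        rw [← hsub, hv]; abel
      obtain ⟨μ', ν', h1, h2, h3, h4, h5⟩ :=
        ih μ (ν + RS.simple i) lam hμ ⟨hroot, hQ⟩ hlam c' hsum' hrep'
      refine ⟨μ', ν', h1, h2, h3, ?_, h5⟩
      have heq : ν' - ν = (ν' - (ν + RS.simple i)) + RS.simple i := by abel
      show ν' - ν ∈ RS.Qplus
      rw [heq]
      exact RS.Qplus.add_mem h4 (simple_mem_Qplus i)
    · -- decrement lam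
      have hvi' : ⟪v, RS.simple i⟫
          = ⟪lam, RS.simple i⟫ - ⟪μ, RS.simple i⟫ - ⟪ν, RS.simple i⟫ := by
        rw [hv, inner_sub_left, inner_sub_left]
      have hlami : (0:ℝ) < ⟪lam, RS.simple i⟫ := by
        rw [hvi'] at hvi; linarith
      have hlamne : lam ≠ RS.simple i := by
        intro h0
        have hsum0 : ∑ j, (if j = i then (1:ℝ) else 0) • RS.simple j
            = ∑ j, ((cμ j : ℝ) + (cν j : ℝ) + (c j : ℝ)) • RS.simple j := by
          rw [sum_ite_one_smul]
          have h2 : ∀ j : Fin n, ((cμ j : ℝ) + (cν j : ℝ) + (c j : ℝ)) • RS.simple j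
              = (cμ j:ℝ) • RS.simple j + (cν j:ℝ) • RS.simple j + (c j:ℝ) • RS.simple j := by
            intro j; rw [add_smul, add_smul]
          rw [Finset.sum_congr rfl (fun j _ => h2 j), Finset.sum_add_distrib,
            Finset.sum_add_distrib, ← hcμ, ← hcν, ← hrep, hv, ← h0]
          abel
        have hcoeff := coeff_unique (RS := RS) hsum0
        have hμ0 : μ = 0 := by
          rw [hcμ]
          apply Finset.sum_eq_zero
          intro j _
          have hj := congrFun hcoeff j
          by_cases hji : j = i
          · subst hji
            rw [if_pos rfl] at hj
            have h1 : (1:ℝ) ≤ (c j : ℝ) := by exact_mod_cast hci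
            have h2 : (0:ℝ) ≤ (cν j : ℝ) := Nat.cast_nonneg _
            have h3 : (0:ℝ) ≤ (cμ j : ℝ) := Nat.cast_nonneg _
            have h4 : (cμ j : ℝ) = 0 := by linarith
            rw [h4, zero_smul]
          · simp only [if_neg hji] at hj
            have h1 : (0:ℝ) ≤ (c j : ℝ) := Nat.cast_nonneg _
            have h2 : (0:ℝ) ≤ (cν j : ℝ) := Nat.cast_nonneg _
            have h3 : (0:ℝ) ≤ (cμ j : ℝ) := Nat.cast_nonneg _
            have h4 : (cμ j : ℝ) = 0 := by linarith
            rw [h4, zero_smul]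
        exact RS.zero_not_mem (hμ0 ▸ hμ.1)
      have hroot : lam - RS.simple i ∈ RS.R := by
        have hneg : ⟪lam, -RS.simple i⟫ < 0 := by
          rw [inner_neg_right]; simpa using hlami
        have hne : lam + -RS.simple i ≠ 0 := by
          intro h0
          exact hlamne (by
            have : lam - RS.simple i = 0 := by rw [sub_eq_add_neg]; exact h0
            exact sub_eq_zero.mp this)
        have := root_add hlam (RS.neg_mem _ (RS.simple_mem i)) hneg hne
        rwa [← sub_eq_add_neg] at this
      have hrep' : (lam - RS.simple i) - μ - ν = ∑ j, ((c' j : ℕ) : ℝ) • RS.simple j := by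
        rw [← hsub, hv]; abel
      exact ih μ ν (lam - RS.simple i) hμ hν hroot c' hsum' hrep' 

end Key

/-- An antichain `A` generates an abelian ideal iff (1) for distinct `α, β ∈ A`
there is `i` with `d_i α + d_i β > d_i θ`, and (2) for each `α ∈ A` there is `i`
with `2 d_i α > d_i θ`. -/
theorem stmt_7 {n : ℕ} (RS : BasedRootSys n) (θ : EuclideanSpace ℝ (Fin n))
    (hθpos : θ ∈ RS.Rpos) (hθmax : ∀ α ∈ RS.R, RS.le α θ)
    (d : EuclideanSpace ℝ (Fin n) → Fin n → ℝ)
    (hd : ∀ v, v = ∑ i, d v i • RS.simple i)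
    (A : Set (EuclideanSpace ℝ (Fin n))) (hA : RS.IsJAntichain ∅ A) :
    (∀ α ∈ RS.PhiOf A, ∀ β ∈ RS.PhiOf A, α + β ∉ RS.R) ↔
    ((∀ α ∈ A, ∀ β ∈ A, α ≠ β → ∃ i, d θ i < d α i + d β i) ∧
     (∀ α ∈ A, ∃ i, d θ i < 2 * d α i)) := by
  classical
  -- basic facts about d
  have d_eq : ∀ (v : EuclideanSpace ℝ (Fin n)) (c : Fin n → ℝ),
      v = ∑ i, c i • RS.simple i → d v = c := by
    intro v c hc
    exact coeff_unique (RS := RS) ((hd v).symm.trans hc)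
  have dnn : ∀ v ∈ RS.Qplus, ∀ i, 0 ≤ d v i := by
    intro v hv i
    obtain ⟨c, hc⟩ := mem_Qplus_iff.mp hv
    rw [congrFun (d_eq v _ hc) i]
    exact Nat.cast_nonneg _
  have dadd : ∀ u v : EuclideanSpace ℝ (Fin n), d (u + v) = fun i => d u i + d v i := by
    intro u v
    apply d_eq
    have h2 : ∀ i : Fin n, (d u i + d v i) • RS.simple i
        = d u i • RS.simple i + d v i • RS.simple i := fun i => add_smul _ _ _
    rw [Finset.sum_congr rfl (fun i _ => h2 i), Finset.sum_add_distrib,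
      ← hd u, ← hd v]
  constructor
  · intro habel
    have main : ∀ α ∈ A, ∀ β ∈ A, (∀ i, d α i + d β i ≤ d θ i) → False := by
      intro α hα β hβ hle
      have hαp : α ∈ RS.Rpos := hA.1 hα
      have hβp : β ∈ RS.Rpos := hA.1 hβ
      obtain ⟨cα, hcα⟩ := mem_Qplus_iff.mp hαp.2
      obtain ⟨cβ, hcβ⟩ := mem_Qplus_iff.mp hβp.2
      obtain ⟨cθ, hcθ⟩ := mem_Qplus_iff.mp hθpos.2
      have hdα := d_eq α _ hcα
      have hdβ := d_eq β _ hcβ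
      have hdθ := d_eq θ _ hcθ
      have hnatle : ∀ i, cα i + cβ i ≤ cθ i := by
        intro i
        have := hle i
        rw [congrFun hdα i, congrFun hdβ i, congrFun hdθ i] at this
        exact_mod_cast this
      set c : Fin n → ℕ := fun i => cθ i - cα i - cβ i with hc
      have hcastc : ∀ i, ((c i : ℕ) : ℝ) = (cθ i : ℝ) - (cα i : ℝ) - (cβ i : ℝ) := by
        intro i
        have h2 : c i + cβ i + cα i = cθ i := by
          simp only [hc]
          have := hnatle i
          omega
        have := congrArg (fun k : ℕ => (k : ℝ)) h2
        push_cast at this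
        linarith
      have hrep : θ - α - β = ∑ i, ((c i : ℕ) : ℝ) • RS.simple i := by
        rw [hcθ, hcα, hcβ]
        have h2 : ∀ i : Fin n, ((c i : ℕ) : ℝ) • RS.simple i
            = (cθ i : ℝ) • RS.simple i - (cα i : ℝ) • RS.simple i
              - (cβ i : ℝ) • RS.simple i := by
          intro i
          rw [hcastc i, sub_smul, sub_smul]
        rw [Finset.sum_congr rfl (fun i _ => h2 i), Finset.sum_sub_distrib,
          Finset.sum_sub_distrib]
      obtain ⟨μ', ν', h1, h2, h3, h4, h5⟩ :=
        key (RS := RS) (∑ i, c i) α β θ hαp hβp hθpos.1 c rfl hrep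
      exact habel μ' ⟨h1, α, hα, h3⟩ ν' ⟨h2, β, hβ, h4⟩ h5
    constructor
    · intro α hα β hβ hne
      by_contra h
      push_neg at h
      exact main α hα β hβ (fun i => h i)
    · intro α hα
      by_contra h
      push_neg at h
      exact main α hα α hα (fun i => by linarith [h i])
  · rintro ⟨h1, h2⟩ γ hγ δ hδ hsum
    obtain ⟨hγp, α, hαA, hαγ⟩ := hγ
    obtain ⟨hδp, β, hβA, hβδ⟩ := hδ
    have hθs : θ - (γ + δ) ∈ RS.Qplus := hθmax (γ + δ) hsum
    have hγα : γ - α ∈ RS.Qplus := hαγ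
    have hδβ : δ - β ∈ RS.Qplus := hβδ
    have hkey : ∀ i, d α i + d β i ≤ d θ i := by
      intro i
      have e1 : θ = (γ + δ) + (θ - (γ + δ)) := by abel
      have e2 : γ + δ = (α + (γ - α)) + (β + (δ - β)) := by abel
      have hdθ : d θ i = d (γ + δ) i + d (θ - (γ + δ)) i := by
        conv_lhs => rw [e1]
        rw [congrFun (dadd _ _) i]
      have hdγδ : d (γ + δ) i = (d α i + d (γ - α) i) + (d β i + d (δ - β) i) := by
        conv_lhs => rw [e2]
        rw [congrFun (dadd _ _) i, congrFun (dadd α (γ - α)) i,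
          congrFun (dadd β (δ - β)) i]
      have n1 := dnn _ hθs i
      have n2 := dnn _ hγα i
      have n3 := dnn _ hδβ i
      rw [hdθ, hdγδ]
      linarith
    by_cases heq : α = β
    · subst heq
      obtain ⟨i, hi⟩ := h2 α hαA
      linarith [hkey i]
    · obtain ⟨i, hi⟩ := h1 α hαA β hβA heq
      linarith [hkey i]
end
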